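/- arXiv:2211.04820 — 2 statements merged into one kernel-verified Lean document; each statement's English description precedes it below -/
import Mathlib

section
/- Let P be a polyomino whose complement graph Ḡ_P is chordal. Then P has at most one maximal cell interval of cardinality at least 3; that is, if J is a maximal cell interval of P with |J| ≥ 3, then every maximal cell interval I ≠ J of P satisfies |I| ≤ 2. -/
/-- A cell of the grid, identified with its lower-left corner. -/
abbrev Cell : Type := ℤ × ℤ

/-- Two cells are adjacent if they differ by `(±1,0)` or `(0,±1)`. -/
def Adjacent (c d : Cell) : Prop :=
  (c.1 = d.1 ∧ (c.2 = d.2 + 1 ∨ d.2 = c.2 + 1)) ∨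
  (c.2 = d.2 ∧ (c.1 = d.1 + 1 ∨ d.1 = c.1 + 1))

/-- A polyomino: a finite nonempty set of cells, any two of which are joined by a
path of adjacent cells inside the set. -/
def IsPolyomino (P : Finset Cell) : Prop :=
  P.Nonempty ∧ ∀ c ∈ P, ∀ d ∈ P,
    Relation.ReflTransGen (fun a b => Adjacent a b ∧ a ∈ P ∧ b ∈ P) c d

/-- A horizontal segment of consecutive cells in a row. -/
def IsHSeg (S : Finset Cell) : Prop :=
  ∃ y a b : ℤ, a ≤ b ∧ S = (Finset.Icc a b).image (fun x => (x, y))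

/-- A vertical segment of consecutive cells in a column. -/
def IsVSeg (S : Finset Cell) : Prop :=
  ∃ x a b : ℤ, a ≤ b ∧ S = (Finset.Icc a b).image (fun y => (x, y))

/-- A maximal horizontal cell interval of `P`. -/
def IsMaxHInterval (P I : Finset Cell) : Prop :=
  IsHSeg I ∧ I ⊆ P ∧ ∀ I', IsHSeg I' → I' ⊆ P → I ⊆ I' → I' = I

/-- A maximal vertical cell interval of `P`. -/
def IsMaxVInterval (P I : Finset Cell) : Prop :=
  IsVSeg I ∧ I ⊆ P ∧ ∀ I', IsVSeg I' → I' ⊆ P → I ⊆ I' → I' = I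

/-- A maximal cell interval of `P`. -/
def IsMaxInterval (P I : Finset Cell) : Prop :=
  IsMaxHInterval P I ∨ IsMaxVInterval P I

/-- Two distinct cells of `P` attack each other if they lie in a common maximal
cell interval of `P`. -/
def Attacks (P : Finset Cell) (c d : Cell) : Prop :=
  c ≠ d ∧ ∃ I, IsMaxInterval P I ∧ c ∈ I ∧ d ∈ I

/-- A set of pairwise non-attacking cells of `P` (a face of the rook complex). -/
def IsRookSet (P F : Finset Cell) : Prop :=
  F ⊆ P ∧ ∀ c ∈ F, ∀ d ∈ F, ¬ Attacks P c d

/-- A maximal set of pairwise non-attacking cells of `P` (a facet of the rook complex). -/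
def IsMaxRookSet (P F : Finset Cell) : Prop :=
  IsRookSet P F ∧ ∀ G, IsRookSet P G → F ⊆ G → G = F

/-- An interval `I` is embedded if some set `F` of pairwise non-attacking cells,
disjoint from `I`, attacks every cell of `I`. -/
def IsEmbedded (P I : Finset Cell) : Prop :=
  ∃ F : Finset Cell, IsRookSet P F ∧ F ∩ I = ∅ ∧ ∀ c ∈ I, ∃ f ∈ F, Attacks P f c

/-- A partition of `P`: pairwise disjoint maximal cell intervals whose union is `P`. -/
def IsPartition (P : Finset Cell) (A : Finset (Finset Cell)) : Prop :=
  (∀ I ∈ A, IsMaxInterval P I) ∧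
  (∀ I ∈ A, ∀ J ∈ A, I ≠ J → Disjoint I J) ∧
  A.biUnion id = P

/-- A super partition: a partition none of whose intervals is embedded. -/
def IsSuperPartition (P : Finset Cell) (A : Finset (Finset Cell)) : Prop :=
  IsPartition P A ∧ ∀ I ∈ A, ¬ IsEmbedded P I

/-- `P` is a square: a translate of the `n × n` block of cells for some `n ≥ 1`. -/
def IsSquareBlock (P : Finset Cell) : Prop :=
  ∃ a b n : ℤ, 1 ≤ n ∧ P = Finset.Icc a (a + n - 1) ×ˢ Finset.Icc b (b + n - 1)

/-- The graph `G_P` on the cells of `P` whose edges are the attacking pairs. -/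
def GP (P : Finset Cell) : SimpleGraph {c : Cell // c ∈ P} where
  Adj c d := Attacks P (c : Cell) (d : Cell)
  symm := by
    constructor
    rintro c d ⟨hne, I, hI, hc, hd⟩
    exact ⟨hne.symm, I, hI, hd, hc⟩
  loopless := by
    constructor
    rintro c ⟨hne, -⟩
    exact hne rfl

/-- The complement graph `Ḡ_P`. -/
def GBar (P : Finset Cell) : SimpleGraph {c : Cell // c ∈ P} := (GP P)ᶜ

/-- `G` has an induced cycle of length `n`: an injective map from `ZMod n`
whose image induces exactly the cycle adjacencies. -/
def HasInducedCycle {V : Type*} (G : SimpleGraph V) (n : ℕ) : Prop :=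
  3 ≤ n ∧ ∃ f : ZMod n → V, Function.Injective f ∧
    ∀ i j : ZMod n, G.Adj (f i) (f j) ↔ (i = j + 1 ∨ j = i + 1)

/-- A graph is chordal if it has no induced cycle of length at least 4. -/
def IsChordal {V : Type*} (G : SimpleGraph V) : Prop :=
  ∀ n, 4 ≤ n → ¬ HasInducedCycle G n

/-- `P` is simple: any two cells outside `P` are joined by a path of adjacent
cells outside `P`. -/
def IsSimple (P : Finset Cell) : Prop :=
  ∀ c d : Cell, c ∉ P → d ∉ P →
    Relation.ReflTransGen (fun a b => Adjacent a b ∧ a ∉ P ∧ b ∉ P) c d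

/-- `P` is thin: it contains no four cells forming a `2 × 2` square. -/
def IsThin (P : Finset Cell) : Prop :=
  ¬ ∃ a : Cell, ({a, (a.1 + 1, a.2), (a.1, a.2 + 1), (a.1 + 1, a.2 + 1)} : Finset Cell) ⊆ P

/-- A path of distinct cells of `P`, consecutive cells being adjacent. -/
def IsCellPath (P : Finset Cell) (l : List Cell) : Prop :=
  l.Nodup ∧ (∀ c ∈ l, c ∈ P) ∧ l.Chain' Adjacent

/-- The number of changes of direction of a path of cells: positions `k`
(with `1 ≤ k ≤ length - 2`) where the `(k-1)`-st and `(k+1)`-st cells differ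
in both coordinates. -/
def dirChanges (l : List Cell) : ℕ :=
  ((Finset.Ico 1 (l.length - 1)).filter (fun k =>
    (l.getD (k - 1) (0, 0)).1 ≠ (l.getD (k + 1) (0, 0)).1 ∧
    (l.getD (k - 1) (0, 0)).2 ≠ (l.getD (k + 1) (0, 0)).2)).card

/-- The eight rotations/reflections of the grid. -/
def dihedralMaps : List (Cell → Cell) :=
  [fun p => (p.1, p.2), fun p => (-p.2, p.1), fun p => (-p.1, -p.2), fun p => (p.2, -p.1),
   fun p => (p.2, p.1), fun p => (-p.1, p.2), fun p => (-p.2, -p.1), fun p => (p.1, -p.2)]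

/-- `P` is obtained from `Q` by a translation, rotation or reflection of `ℤ²`. -/
def CongruentTo (P Q : Finset Cell) : Prop :=
  ∃ g ∈ dihedralMaps, ∃ t : Cell, P = Q.image (fun p => g p + t)

/-- A brush polyomino with handle `J`. -/
def IsBrush (P J : Finset Cell) : Prop :=
  IsPolyomino P ∧ IsSimple P ∧ IsThin P ∧ IsMaxInterval P J ∧
  (∀ I, IsMaxInterval P I → 2 ≤ I.card → I ≠ J → (I ∩ J).Nonempty) ∧
  (∀ c ∈ P, c ∈ J ∨ ∃ I, IsMaxInterval P I ∧ 2 ≤ I.card ∧ c ∈ I)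

/-- A short brush polyomino: a brush all of whose bristles have at most two cells. -/
def IsShortBrush (P : Finset Cell) : Prop :=
  ∃ J, IsBrush P J ∧ ∀ I, IsMaxInterval P I → I ≠ J → I.card ≤ 2

/-- A pure brush polyomino: handle `J` of cardinality `d` together with `d`
pairwise disjoint bristles `I 0, …, I (d-1)` perpendicular to `J`, each meeting
`J`, whose union is `P`. -/
def IsPureBrush (P J : Finset Cell) (d : ℕ) (I : Fin d → Finset Cell) : Prop :=
  IsPolyomino P ∧ IsSimple P ∧ IsThin P ∧
  J.card = d ∧
  ((IsMaxHInterval P J ∧ ∀ k, IsMaxVInterval P (I k)) ∨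
   (IsMaxVInterval P J ∧ ∀ k, IsMaxHInterval P (I k))) ∧
  (∀ j k, j ≠ k → Disjoint (I j) (I k)) ∧
  (∀ k, ((I k) ∩ J).Nonempty) ∧
  Finset.univ.biUnion I = P

/-- The `k`-th elementary symmetric polynomial of `x 0, …, x (d-1)`. -/
def esymm {R : Type*} [CommRing R] {d : ℕ} (k : ℕ) (x : Fin d → R) : R :=
  ∑ s ∈ Finset.powersetCard k (Finset.univ : Finset (Fin d)), ∏ i ∈ s, x i

/-- `G_P` has an induced matching with `n` edges `{A i, B i}`. -/
def HasInducedMatching (P : Finset Cell) (n : ℕ) : Prop :=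
  ∃ A B : Fin n → Cell,
    (∀ i, Attacks P (A i) (B i)) ∧
    (∀ i j, i ≠ j → A i ≠ A j) ∧
    (∀ i j, i ≠ j → B i ≠ B j) ∧
    (∀ i j, A i ≠ B j) ∧
    (∀ i j, i ≠ j →
      ¬ Attacks P (A i) (A j) ∧ ¬ Attacks P (A i) (B j) ∧ ¬ Attacks P (B i) (B j))

/-- The induced matching number `ν(G_P)`. -/
noncomputable def matchNum (P : Finset Cell) : ℕ := sSup {n | HasInducedMatching P n}

/-- `c` is a single cell of the maximal interval `I`: the maximal interval of `P`
through `c` perpendicular to `I` is `{c}`. -/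
def IsSingleCell (P I : Finset Cell) (c : Cell) : Prop :=
  c ∈ I ∧
  ((IsMaxHInterval P I ∧ ∀ I', IsMaxVInterval P I' → c ∈ I' → I' = {c}) ∨
   (IsMaxVInterval P I ∧ ∀ I', IsMaxHInterval P I' → c ∈ I' → I' = {c}))

section S8

open Finset

lemma S8_mem_hseg {y a b : ℤ} {p : Cell} :
    p ∈ (Finset.Icc a b).image (fun x => (x, y)) ↔ a ≤ p.1 ∧ p.1 ≤ b ∧ p.2 = y := by
  constructor
  · rintro h
    obtain ⟨x, hx, rfl⟩ := Finset.mem_image.mp h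
    simp only [Finset.mem_Icc] at hx
    exact ⟨hx.1, hx.2, rfl⟩
  · rintro ⟨h1, h2, h3⟩
    exact Finset.mem_image.mpr ⟨p.1, Finset.mem_Icc.mpr ⟨h1, h2⟩, Prod.ext rfl h3.symm⟩

lemma S8_mem_vseg {x a b : ℤ} {p : Cell} :
    p ∈ (Finset.Icc a b).image (fun y => (x, y)) ↔ a ≤ p.2 ∧ p.2 ≤ b ∧ p.1 = x := by
  constructor
  · rintro h
    obtain ⟨t, ht, rfl⟩ := Finset.mem_image.mp h
    simp only [Finset.mem_Icc] at ht
    exact ⟨ht.1, ht.2, rfl⟩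
  · rintro ⟨h1, h2, h3⟩
    exact Finset.mem_image.mpr ⟨p.2, Finset.mem_Icc.mpr ⟨h1, h2⟩, Prod.ext h3.symm rfl⟩

lemma S8_card_hseg {y a b : ℤ} :
    ((Finset.Icc a b).image (fun x => (x, y))).card = (b + 1 - a).toNat := by
  rw [Finset.card_image_of_injective _ (fun x1 x2 h => by simpa using congrArg Prod.fst h),
    Int.card_Icc]

lemma S8_card_vseg {x a b : ℤ} :
    ((Finset.Icc a b).image (fun y => (x, y))).card = (b + 1 - a).toNat := by
  rw [Finset.card_image_of_injective _ (fun x1 x2 h => by simpa using congrArg Prod.snd h),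
    Int.card_Icc]

lemma S8_attacks_symm {P : Finset Cell} {c d : Cell} (h : Attacks P c d) : Attacks P d c := by
  obtain ⟨hne, K, hK, hc, hd⟩ := h
  exact ⟨hne.symm, K, hK, hd, hc⟩

lemma S8_attacks_mem {P : Finset Cell} {c d : Cell} (h : Attacks P c d) : c ∈ P ∧ d ∈ P := by
  obtain ⟨hne, K, hK, hc, hd⟩ := h
  rcases hK with ⟨_, hKP, _⟩ | ⟨_, hKP, _⟩ <;> exact ⟨hKP hc, hKP hd⟩

lemma S8_attack_of_interval {P K : Finset Cell} {c d : Cell} (hK : IsMaxInterval P K)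
    (hc : c ∈ K) (hd : d ∈ K) (hne : c ≠ d) : Attacks P c d :=
  ⟨hne, K, hK, hc, hd⟩

lemma S8_nonattack_diag {P : Finset Cell} {c d : Cell} (h1 : c.1 ≠ d.1) (h2 : c.2 ≠ d.2) :
    ¬ Attacks P c d := by
  rintro ⟨hne, K, hK, hc, hd⟩
  rcases hK with ⟨⟨y, a, b, hab, rfl⟩, -, -⟩ | ⟨⟨x, a, b, hab, rfl⟩, -, -⟩
  · exact h2 ((S8_mem_hseg.mp hc).2.2.trans (S8_mem_hseg.mp hd).2.2.symm)
  · exact h1 ((S8_mem_vseg.mp hc).2.2.trans (S8_mem_vseg.mp hd).2.2.symm)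

lemma S8_exists_maxV {P S : Finset Cell} (hS : IsVSeg S) (hSP : S ⊆ P) :
    ∃ K, IsMaxVInterval P K ∧ S ⊆ K := by
  classical
  have hne : (P.powerset.filter (fun T => IsVSeg T ∧ S ⊆ T)).Nonempty :=
    ⟨S, by simp [Finset.mem_filter, Finset.mem_powerset, hS, hSP]⟩
  obtain ⟨T, hT, hmax⟩ := Finset.exists_max_image _ Finset.card hne
  simp only [Finset.mem_filter, Finset.mem_powerset] at hT
  refine ⟨T, ⟨hT.2.1, hT.1, ?_⟩, hT.2.2⟩
  intro K hK hKP hTK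
  have hKmem : K ∈ P.powerset.filter (fun T => IsVSeg T ∧ S ⊆ T) := by
    simp only [Finset.mem_filter, Finset.mem_powerset]
    exact ⟨hKP, hK, hT.2.2.trans hTK⟩
  exact (Finset.eq_of_subset_of_card_le hTK (hmax K hKmem)).symm

lemma S8_exists_maxH {P S : Finset Cell} (hS : IsHSeg S) (hSP : S ⊆ P) :
    ∃ K, IsMaxHInterval P K ∧ S ⊆ K := by
  classical
  have hne : (P.powerset.filter (fun T => IsHSeg T ∧ S ⊆ T)).Nonempty :=
    ⟨S, by simp [Finset.mem_filter, Finset.mem_powerset, hS, hSP]⟩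
  obtain ⟨T, hT, hmax⟩ := Finset.exists_max_image _ Finset.card hne
  simp only [Finset.mem_filter, Finset.mem_powerset] at hT
  refine ⟨T, ⟨hT.2.1, hT.1, ?_⟩, hT.2.2⟩
  intro K hK hKP hTK
  have hKmem : K ∈ P.powerset.filter (fun T => IsHSeg T ∧ S ⊆ T) := by
    simp only [Finset.mem_filter, Finset.mem_powerset]
    exact ⟨hKP, hK, hT.2.2.trans hTK⟩
  exact (Finset.eq_of_subset_of_card_le hTK (hmax K hKmem)).symm

lemma S8_attack_vseg {P : Finset Cell} {x y1 y2 : ℤ} (hlt : y1 < y2)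
    (hall : ∀ t, y1 ≤ t → t ≤ y2 → (x, t) ∈ P) : Attacks P (x, y1) (x, y2) := by
  have hS : IsVSeg ((Finset.Icc y1 y2).image (fun t => (x, t))) := ⟨x, y1, y2, le_of_lt hlt, rfl⟩
  have hSP : (Finset.Icc y1 y2).image (fun t => (x, t)) ⊆ P := by
    intro p hp
    obtain ⟨h1, h2, h3⟩ := S8_mem_vseg.mp hp
    have : p = (x, p.2) := Prod.ext h3 rfl
    rw [this]; exact hall p.2 h1 h2
  obtain ⟨K, hK, hSK⟩ := S8_exists_maxV hS hSP
  refine ⟨by simp [Prod.ext_iff]; omega, K, Or.inr hK, ?_, ?_⟩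
  · exact hSK (S8_mem_vseg.mpr ⟨le_refl _, le_of_lt hlt, rfl⟩)
  · exact hSK (S8_mem_vseg.mpr ⟨le_of_lt hlt, le_refl _, rfl⟩)

lemma S8_nonattack_col_gap {P : Finset Cell} {x y1 y2 t : ℤ} (hne : y1 ≠ y2)
    (ht1 : min y1 y2 ≤ t) (ht2 : t ≤ max y1 y2) (htP : (x, t) ∉ P) :
    ¬ Attacks P (x, y1) (x, y2) := by
  rintro ⟨hnq, K, hK, hc, hd⟩
  rcases hK with ⟨⟨y, a, b, hab, rfl⟩, -, -⟩ | ⟨⟨x', a, b, hab, rfl⟩, hKP, -⟩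
  · obtain ⟨-, -, h1⟩ := S8_mem_hseg.mp hc
    obtain ⟨-, -, h2⟩ := S8_mem_hseg.mp hd
    exact hne (h1.trans h2.symm)
  · obtain ⟨hc1, hc2, hc3⟩ := S8_mem_vseg.mp hc
    obtain ⟨hd1, hd2, hd3⟩ := S8_mem_vseg.mp hd
    simp only at hc1 hc2 hc3 hd1 hd2 hd3
    subst hc3
    apply htP
    apply hKP
    exact S8_mem_vseg.mpr ⟨by simp; omega, by simp; omega, rfl⟩

end S8
section S8B

lemma S8_maxH_unique {P K1 K2 : Finset Cell} {c : Cell} (h1 : IsMaxHInterval P K1)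
    (h2 : IsMaxHInterval P K2) (hc1 : c ∈ K1) (hc2 : c ∈ K2) : K1 = K2 := by
  obtain ⟨⟨y1, a1, b1, hab1, rfl⟩, hP1, hm1⟩ := h1
  obtain ⟨⟨y2, a2, b2, hab2, rfl⟩, hP2, hm2⟩ := h2
  obtain ⟨hca1, hcb1, hcy1⟩ := S8_mem_hseg.mp hc1
  obtain ⟨hca2, hcb2, hcy2⟩ := S8_mem_hseg.mp hc2
  have hy : y1 = y2 := hcy1.symm.trans hcy2
  subst hy
  set U : Finset Cell := (Finset.Icc (min a1 a2) (max b1 b2)).image (fun x => (x, y1)) with hU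
  have hUseg : IsHSeg U := ⟨y1, _, _, by omega, rfl⟩
  have hUP : U ⊆ P := by
    intro p hp
    obtain ⟨hp1, hp2, hp3⟩ := S8_mem_hseg.mp hp
    by_cases hq : a1 ≤ p.1 ∧ p.1 ≤ b1
    · exact hP1 (S8_mem_hseg.mpr ⟨hq.1, hq.2, hp3⟩)
    · exact hP2 (S8_mem_hseg.mpr ⟨by omega, by omega, hp3⟩)
  have e1 := hm1 U hUseg hUP (by
    intro p hp
    obtain ⟨hp1, hp2, hp3⟩ := S8_mem_hseg.mp hp
    exact S8_mem_hseg.mpr ⟨by omega, by omega, hp3⟩)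
  have e2 := hm2 U hUseg hUP (by
    intro p hp
    obtain ⟨hp1, hp2, hp3⟩ := S8_mem_hseg.mp hp
    exact S8_mem_hseg.mpr ⟨by omega, by omega, hp3⟩)
  rw [← e1, ← e2]

lemma S8_maxV_unique {P K1 K2 : Finset Cell} {c : Cell} (h1 : IsMaxVInterval P K1)
    (h2 : IsMaxVInterval P K2) (hc1 : c ∈ K1) (hc2 : c ∈ K2) : K1 = K2 := by
  obtain ⟨⟨x1, a1, b1, hab1, rfl⟩, hP1, hm1⟩ := h1
  obtain ⟨⟨x2, a2, b2, hab2, rfl⟩, hP2, hm2⟩ := h2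
  obtain ⟨hca1, hcb1, hcy1⟩ := S8_mem_vseg.mp hc1
  obtain ⟨hca2, hcb2, hcy2⟩ := S8_mem_vseg.mp hc2
  have hy : x1 = x2 := hcy1.symm.trans hcy2
  subst hy
  set U : Finset Cell := (Finset.Icc (min a1 a2) (max b1 b2)).image (fun y => (x1, y)) with hU
  have hUseg : IsVSeg U := ⟨x1, _, _, by omega, rfl⟩
  have hUP : U ⊆ P := by
    intro p hp
    obtain ⟨hp1, hp2, hp3⟩ := S8_mem_vseg.mp hp
    by_cases hq : a1 ≤ p.2 ∧ p.2 ≤ b1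
    · exact hP1 (S8_mem_vseg.mpr ⟨hq.1, hq.2, hp3⟩)
    · exact hP2 (S8_mem_vseg.mpr ⟨by omega, by omega, hp3⟩)
  have e1 := hm1 U hUseg hUP (by
    intro p hp
    obtain ⟨hp1, hp2, hp3⟩ := S8_mem_vseg.mp hp
    exact S8_mem_vseg.mpr ⟨by omega, by omega, hp3⟩)
  have e2 := hm2 U hUseg hUP (by
    intro p hp
    obtain ⟨hp1, hp2, hp3⟩ := S8_mem_vseg.mp hp
    exact S8_mem_vseg.mpr ⟨by omega, by omega, hp3⟩)
  rw [← e1, ← e2]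

lemma S8_nonattack_two_maxH {P I J : Finset Cell} {c d : Cell} (hI : IsMaxHInterval P I)
    (hJ : IsMaxHInterval P J) (hIJ : I ≠ J) (hc : c ∈ I) (hd : d ∈ J) (hrow : c.2 = d.2) :
    ¬ Attacks P c d := by
  rintro ⟨hne, K, hK, hcK, hdK⟩
  rcases hK with hKH | ⟨⟨x, a, b, hab, rfl⟩, -, -⟩
  · have e1 : K = I := S8_maxH_unique hKH hI hcK hc
    have e2 : K = J := S8_maxH_unique hKH hJ hdK hd
    exact hIJ (e1.symm.trans e2)
  · obtain ⟨-, -, h1⟩ := S8_mem_vseg.mp hcK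
    obtain ⟨-, -, h2⟩ := S8_mem_vseg.mp hdK
    exact hne (Prod.ext (h1.trans h2.symm) hrow)

lemma S8_nonattack_two_maxV {P I J : Finset Cell} {c d : Cell} (hI : IsMaxVInterval P I)
    (hJ : IsMaxVInterval P J) (hIJ : I ≠ J) (hc : c ∈ I) (hd : d ∈ J) (hcol : c.1 = d.1) :
    ¬ Attacks P c d := by
  rintro ⟨hne, K, hK, hcK, hdK⟩
  rcases hK with ⟨⟨y, a, b, hab, rfl⟩, -, -⟩ | hKV
  · obtain ⟨-, -, h1⟩ := S8_mem_hseg.mp hcK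
    obtain ⟨-, -, h2⟩ := S8_mem_hseg.mp hdK
    exact hne (Prod.ext hcol (h1.trans h2.symm))
  · have e1 : K = I := S8_maxV_unique hKV hI hcK hc
    have e2 : K = J := S8_maxV_unique hKV hJ hdK hd
    exact hIJ (e1.symm.trans e2)

end S8B
section S8C

lemma S8_cycle4 {P : Finset Cell} {a b c d : Cell}
    (hab : Attacks P a b) (hcd : Attacks P c d)
    (hac : ¬ Attacks P a c) (had : ¬ Attacks P a d)
    (hbc : ¬ Attacks P b c) (hbd : ¬ Attacks P b d)
    (nac : a ≠ c) (nad : a ≠ d) (nbc : b ≠ c) (nbd : b ≠ d) :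
    HasInducedCycle (GBar P) 4 := by
  obtain ⟨ha, hb⟩ := S8_attacks_mem hab
  obtain ⟨hc, hd⟩ := S8_attacks_mem hcd
  have hca : ¬ Attacks P c a := fun h => hac (S8_attacks_symm h)
  have hda : ¬ Attacks P d a := fun h => had (S8_attacks_symm h)
  have hcb : ¬ Attacks P c b := fun h => hbc (S8_attacks_symm h)
  have hdb : ¬ Attacks P d b := fun h => hbd (S8_attacks_symm h)
  have hba : Attacks P b a := S8_attacks_symm hab
  have hdc : Attacks P d c := S8_attacks_symm hcd
  have nca : c ≠ a := nac.symm
  have ncb : c ≠ b := nbc.symm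
  have nda : d ≠ a := nad.symm
  have ndb : d ≠ b := nbd.symm
  have hcase : ∀ i : ZMod 4, i = 0 ∨ i = 1 ∨ i = 2 ∨ i = 3 := by decide
  refine ⟨by norm_num, ![⟨a, ha⟩, ⟨c, hc⟩, ⟨b, hb⟩, ⟨d, hd⟩], ?_, ?_⟩
  · intro i j hij
    rcases hcase i with rfl|rfl|rfl|rfl <;> rcases hcase j with rfl|rfl|rfl|rfl
    · rfl
    · exact absurd (congrArg Subtype.val hij) nac
    · exact absurd (congrArg Subtype.val hij) hab.1
    · exact absurd (congrArg Subtype.val hij) nad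
    · exact absurd (congrArg Subtype.val hij) nca
    · rfl
    · exact absurd (congrArg Subtype.val hij) ncb
    · exact absurd (congrArg Subtype.val hij) hcd.1
    · exact absurd (congrArg Subtype.val hij) hba.1
    · exact absurd (congrArg Subtype.val hij) nbc
    · rfl
    · exact absurd (congrArg Subtype.val hij) nbd
    · exact absurd (congrArg Subtype.val hij) nda
    · exact absurd (congrArg Subtype.val hij) hdc.1
    · exact absurd (congrArg Subtype.val hij) ndb
    · rfl
  · intro i j
    rcases hcase i with rfl|rfl|rfl|rfl <;> rcases hcase j with rfl|rfl|rfl|rfl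
    · exact iff_of_false (fun h => h.1 rfl) (by decide)
    · exact iff_of_true ⟨fun h => nac (congrArg Subtype.val h), hac⟩ (by decide)
    · exact iff_of_false (fun h => h.2 hab) (by decide)
    · exact iff_of_true ⟨fun h => nad (congrArg Subtype.val h), had⟩ (by decide)
    · exact iff_of_true ⟨fun h => nca (congrArg Subtype.val h), hca⟩ (by decide)
    · exact iff_of_false (fun h => h.1 rfl) (by decide)
    · exact iff_of_true ⟨fun h => ncb (congrArg Subtype.val h), hcb⟩ (by decide)
    · exact iff_of_false (fun h => h.2 hcd) (by decide)
    · exact iff_of_false (fun h => h.2 hba) (by decide)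
    · exact iff_of_true ⟨fun h => nbc (congrArg Subtype.val h), hbc⟩ (by decide)
    · exact iff_of_false (fun h => h.1 rfl) (by decide)
    · exact iff_of_true ⟨fun h => nbd (congrArg Subtype.val h), hbd⟩ (by decide)
    · exact iff_of_true ⟨fun h => nda (congrArg Subtype.val h), hda⟩ (by decide)
    · exact iff_of_false (fun h => h.2 hdc) (by decide)
    · exact iff_of_true ⟨fun h => ndb (congrArg Subtype.val h), hdb⟩ (by decide)
    · exact iff_of_false (fun h => h.1 rfl) (by decide)

end S8C
lemma S8_cycle6 {P : Finset Cell} {a0 a1 a2 b0 b1 b2 : Cell}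
    (hA01 : Attacks P a0 a1) (hA02 : Attacks P a0 a2) (hA12 : Attacks P a1 a2)
    (hB01 : Attacks P b0 b1) (hB02 : Attacks P b0 b2) (hB12 : Attacks P b1 b2)
    (hV0 : Attacks P a0 b0) (hV1 : Attacks P a1 b1) (hV2 : Attacks P a2 b2)
    (hN01 : ¬ Attacks P a0 b1) (hN02 : ¬ Attacks P a0 b2) (hN10 : ¬ Attacks P a1 b0)
    (hN12 : ¬ Attacks P a1 b2) (hN20 : ¬ Attacks P a2 b0) (hN21 : ¬ Attacks P a2 b1)
    (e01 : a0 ≠ b1) (e02 : a0 ≠ b2) (e10 : a1 ≠ b0)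
    (e12 : a1 ≠ b2) (e20 : a2 ≠ b0) (e21 : a2 ≠ b1) :
    HasInducedCycle (GBar P) 6 := by
  obtain ⟨ha0, ha1⟩ := S8_attacks_mem hA01
  obtain ⟨ha2, hb2⟩ := S8_attacks_mem hV2
  obtain ⟨hb0, hb1⟩ := S8_attacks_mem hB01
  have hcase : ∀ i : ZMod 6, i = 0 ∨ i = 1 ∨ i = 2 ∨ i = 3 ∨ i = 4 ∨ i = 5 := by decide
  refine ⟨by norm_num, ![⟨a0, ha0⟩, ⟨b1, hb1⟩, ⟨a2, ha2⟩, ⟨b0, hb0⟩, ⟨a1, ha1⟩, ⟨b2, hb2⟩], ?_, ?_⟩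
  · intro i j hij
    rcases hcase i with rfl|rfl|rfl|rfl|rfl|rfl <;> rcases hcase j with rfl|rfl|rfl|rfl|rfl|rfl
    · rfl
    · exact absurd (congrArg Subtype.val hij) e01
    · exact absurd (congrArg Subtype.val hij) hA02.1
    · exact absurd (congrArg Subtype.val hij) hV0.1
    · exact absurd (congrArg Subtype.val hij) hA01.1
    · exact absurd (congrArg Subtype.val hij) e02
    · exact absurd (congrArg Subtype.val hij) e01.symm
    · rfl
    · exact absurd (congrArg Subtype.val hij) e21.symm
    · exact absurd (congrArg Subtype.val hij) hB01.1.symm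
    · exact absurd (congrArg Subtype.val hij) hV1.1.symm
    · exact absurd (congrArg Subtype.val hij) hB12.1
    · exact absurd (congrArg Subtype.val hij) hA02.1.symm
    · exact absurd (congrArg Subtype.val hij) e21
    · rfl
    · exact absurd (congrArg Subtype.val hij) e20
    · exact absurd (congrArg Subtype.val hij) hA12.1.symm
    · exact absurd (congrArg Subtype.val hij) hV2.1
    · exact absurd (congrArg Subtype.val hij) hV0.1.symm
    · exact absurd (congrArg Subtype.val hij) hB01.1
    · exact absurd (congrArg Subtype.val hij) e20.symm
    · rfl
    · exact absurd (congrArg Subtype.val hij) e10.symm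
    · exact absurd (congrArg Subtype.val hij) hB02.1
    · exact absurd (congrArg Subtype.val hij) hA01.1.symm
    · exact absurd (congrArg Subtype.val hij) hV1.1
    · exact absurd (congrArg Subtype.val hij) hA12.1
    · exact absurd (congrArg Subtype.val hij) e10
    · rfl
    · exact absurd (congrArg Subtype.val hij) e12
    · exact absurd (congrArg Subtype.val hij) e02.symm
    · exact absurd (congrArg Subtype.val hij) hB12.1.symm
    · exact absurd (congrArg Subtype.val hij) hV2.1.symm
    · exact absurd (congrArg Subtype.val hij) hB02.1.symm
    · exact absurd (congrArg Subtype.val hij) e12.symm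
    · rfl
  · intro i j
    rcases hcase i with rfl|rfl|rfl|rfl|rfl|rfl <;> rcases hcase j with rfl|rfl|rfl|rfl|rfl|rfl
    · exact iff_of_false (fun h => h.1 rfl) (by decide)
    · exact iff_of_true ⟨fun h => e01 (congrArg Subtype.val h), hN01⟩ (by decide)
    · exact iff_of_false (fun h => h.2 hA02) (by decide)
    · exact iff_of_false (fun h => h.2 hV0) (by decide)
    · exact iff_of_false (fun h => h.2 hA01) (by decide)
    · exact iff_of_true ⟨fun h => e02 (congrArg Subtype.val h), hN02⟩ (by decide)
    · exact iff_of_true ⟨fun h => e01.symm (congrArg Subtype.val h), (fun h => hN01 (S8_attacks_symm h))⟩ (by decide)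
    · exact iff_of_false (fun h => h.1 rfl) (by decide)
    · exact iff_of_true ⟨fun h => e21.symm (congrArg Subtype.val h), (fun h => hN21 (S8_attacks_symm h))⟩ (by decide)
    · exact iff_of_false (fun h => h.2 (S8_attacks_symm hB01)) (by decide)
    · exact iff_of_false (fun h => h.2 (S8_attacks_symm hV1)) (by decide)
    · exact iff_of_false (fun h => h.2 hB12) (by decide)
    · exact iff_of_false (fun h => h.2 (S8_attacks_symm hA02)) (by decide)
    · exact iff_of_true ⟨fun h => e21 (congrArg Subtype.val h), hN21⟩ (by decide)
    · exact iff_of_false (fun h => h.1 rfl) (by decide)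
    · exact iff_of_true ⟨fun h => e20 (congrArg Subtype.val h), hN20⟩ (by decide)
    · exact iff_of_false (fun h => h.2 (S8_attacks_symm hA12)) (by decide)
    · exact iff_of_false (fun h => h.2 hV2) (by decide)
    · exact iff_of_false (fun h => h.2 (S8_attacks_symm hV0)) (by decide)
    · exact iff_of_false (fun h => h.2 hB01) (by decide)
    · exact iff_of_true ⟨fun h => e20.symm (congrArg Subtype.val h), (fun h => hN20 (S8_attacks_symm h))⟩ (by decide)
    · exact iff_of_false (fun h => h.1 rfl) (by decide)
    · exact iff_of_true ⟨fun h => e10.symm (congrArg Subtype.val h), (fun h => hN10 (S8_attacks_symm h))⟩ (by decide)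
    · exact iff_of_false (fun h => h.2 hB02) (by decide)
    · exact iff_of_false (fun h => h.2 (S8_attacks_symm hA01)) (by decide)
    · exact iff_of_false (fun h => h.2 hV1) (by decide)
    · exact iff_of_false (fun h => h.2 hA12) (by decide)
    · exact iff_of_true ⟨fun h => e10 (congrArg Subtype.val h), hN10⟩ (by decide)
    · exact iff_of_false (fun h => h.1 rfl) (by decide)
    · exact iff_of_true ⟨fun h => e12 (congrArg Subtype.val h), hN12⟩ (by decide)
    · exact iff_of_true ⟨fun h => e02.symm (congrArg Subtype.val h), (fun h => hN02 (S8_attacks_symm h))⟩ (by decide)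
    · exact iff_of_false (fun h => h.2 (S8_attacks_symm hB12)) (by decide)
    · exact iff_of_false (fun h => h.2 (S8_attacks_symm hV2)) (by decide)
    · exact iff_of_false (fun h => h.2 (S8_attacks_symm hB02)) (by decide)
    · exact iff_of_true ⟨fun h => e12.symm (congrArg Subtype.val h), (fun h => hN12 (S8_attacks_symm h))⟩ (by decide)
    · exact iff_of_false (fun h => h.1 rfl) (by decide)
section S8E

lemma S8_perp {P J I : Finset Cell} (hJ : IsMaxHInterval P J) (hI : IsMaxVInterval P I)
    (hJ3 : 3 ≤ J.card) (hI3 : 3 ≤ I.card) : HasInducedCycle (GBar P) 4 := by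
  obtain ⟨y, a, b, hab, hJeq⟩ := hJ.1
  obtain ⟨x, c, d, hcd, hIeq⟩ := hI.1
  rw [hJeq, S8_card_hseg] at hJ3
  rw [hIeq, S8_card_vseg] at hI3
  obtain ⟨u1, u2, hu1, hu2, hu3, hu4, hu5, hu6, hu7⟩ :
      ∃ u1 u2 : ℤ, u1 ≠ x ∧ u2 ≠ x ∧ u1 ≠ u2 ∧ a ≤ u1 ∧ u1 ≤ b ∧ a ≤ u2 ∧ u2 ≤ b := by
    by_cases h1 : x = a
    · exact ⟨a + 1, a + 2, by omega⟩
    · by_cases h2 : x = a + 1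
      · exact ⟨a, a + 2, by omega⟩
      · exact ⟨a, a + 1, by omega⟩
  obtain ⟨v1, v2, hv1, hv2, hv3, hv4, hv5, hv6, hv7⟩ :
      ∃ v1 v2 : ℤ, v1 ≠ y ∧ v2 ≠ y ∧ v1 ≠ v2 ∧ c ≤ v1 ∧ v1 ≤ d ∧ c ≤ v2 ∧ v2 ≤ d := by
    by_cases h1 : y = c
    · exact ⟨c + 1, c + 2, by omega⟩
    · by_cases h2 : y = c + 1
      · exact ⟨c, c + 2, by omega⟩
      · exact ⟨c, c + 1, by omega⟩
  have mA1 : (u1, y) ∈ J := by rw [hJeq]; exact S8_mem_hseg.mpr ⟨hu4, hu5, rfl⟩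
  have mA2 : (u2, y) ∈ J := by rw [hJeq]; exact S8_mem_hseg.mpr ⟨hu6, hu7, rfl⟩
  have mB1 : (x, v1) ∈ I := by rw [hIeq]; exact S8_mem_vseg.mpr ⟨hv4, hv5, rfl⟩
  have mB2 : (x, v2) ∈ I := by rw [hIeq]; exact S8_mem_vseg.mpr ⟨hv6, hv7, rfl⟩
  have hA : Attacks P (u1, y) (u2, y) :=
    S8_attack_of_interval (Or.inl hJ) mA1 mA2 (fun h => hu3 (congrArg Prod.fst h))
  have hB : Attacks P (x, v1) (x, v2) :=
    S8_attack_of_interval (Or.inr hI) mB1 mB2 (fun h => hv3 (congrArg Prod.snd h))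
  exact S8_cycle4 hA hB
    (S8_nonattack_diag hu1 (fun h => hv1 h.symm)) (S8_nonattack_diag hu1 (fun h => hv2 h.symm))
    (S8_nonattack_diag hu2 (fun h => hv1 h.symm)) (S8_nonattack_diag hu2 (fun h => hv2 h.symm))
    (fun h => hu1 (congrArg Prod.fst h)) (fun h => hu1 (congrArg Prod.fst h))
    (fun h => hu2 (congrArg Prod.fst h)) (fun h => hu2 (congrArg Prod.fst h))

lemma S8_parH_aux {P J I : Finset Cell} {y y' a b a' b' : ℤ}
    (hJ : IsMaxHInterval P J) (hI : IsMaxHInterval P I)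
    (hJeq : J = (Finset.Icc a b).image (fun x => (x, y)))
    (hIeq : I = (Finset.Icc a' b').image (fun x => (x, y')))
    (hab : a + 2 ≤ b) (hab' : a' + 2 ≤ b') (hlt : y' < y) :
    HasInducedCycle (GBar P) 4 ∨ HasInducedCycle (GBar P) 6 := by
  classical
  have hJP : J ⊆ P := hJ.2.1
  have hIP : I ⊆ P := hI.2.1
  have hyne : y' ≠ y := by omega
  by_cases hsame : a = a' ∧ b = b' ∧ b = a + 2
  · obtain ⟨h1, h2, h3⟩ := hsame
    subst h1; subst h2; subst h3
    by_cases hbad : ∀ u t : ℤ, a ≤ u → u ≤ a + 2 → y' ≤ t → t ≤ y → (u, t) ∈ P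
    · by_cases hy2 : y' + 1 = y
      · right
        have mI : ∀ k : ℤ, a ≤ k → k ≤ a + 2 → (k, y') ∈ I := fun k h1 h2 => by
          rw [hIeq]; exact S8_mem_hseg.mpr ⟨h1, h2, rfl⟩
        have mJ : ∀ k : ℤ, a ≤ k → k ≤ a + 2 → (k, y) ∈ J := fun k h1 h2 => by
          rw [hJeq]; exact S8_mem_hseg.mpr ⟨h1, h2, rfl⟩
        have attI : ∀ k l : ℤ, a ≤ k → k ≤ a + 2 → a ≤ l → l ≤ a + 2 → k ≠ l →
            Attacks P (k, y') (l, y') := fun k l h1 h2 h3 h4 h5 =>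
          S8_attack_of_interval (Or.inl hI) (mI k h1 h2) (mI l h3 h4)
            (fun h => h5 (congrArg Prod.fst h))
        have attJ : ∀ k l : ℤ, a ≤ k → k ≤ a + 2 → a ≤ l → l ≤ a + 2 → k ≠ l →
            Attacks P (k, y) (l, y) := fun k l h1 h2 h3 h4 h5 =>
          S8_attack_of_interval (Or.inl hJ) (mJ k h1 h2) (mJ l h3 h4)
            (fun h => h5 (congrArg Prod.fst h))
        have attV : ∀ k : ℤ, a ≤ k → k ≤ a + 2 → Attacks P (k, y') (k, y) :=
          fun k h1 h2 => S8_attack_vseg hlt (fun t ht1 ht2 => hbad k t h1 h2 ht1 ht2)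
        have nd : ∀ k l : ℤ, k ≠ l → ¬ Attacks P (k, y') (l, y) :=
          fun k l h => S8_nonattack_diag h hyne
        have ed : ∀ k l : ℤ, k ≠ l → ((k : ℤ), y') ≠ (l, y) :=
          fun k l h hh => h (congrArg Prod.fst hh)
        exact S8_cycle6 (a0 := (a, y')) (a1 := (a+1, y')) (a2 := (a+2, y'))
          (b0 := (a, y)) (b1 := (a+1, y)) (b2 := (a+2, y))
          (attI a (a+1) (by omega) (by omega) (by omega) (by omega) (by omega))
          (attI a (a+2) (by omega) (by omega) (by omega) (by omega) (by omega))
          (attI (a+1) (a+2) (by omega) (by omega) (by omega) (by omega) (by omega))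
          (attJ a (a+1) (by omega) (by omega) (by omega) (by omega) (by omega))
          (attJ a (a+2) (by omega) (by omega) (by omega) (by omega) (by omega))
          (attJ (a+1) (a+2) (by omega) (by omega) (by omega) (by omega) (by omega))
          (attV a (by omega) (by omega))
          (attV (a+1) (by omega) (by omega))
          (attV (a+2) (by omega) (by omega))
          (nd a (a+1) (by omega)) (nd a (a+2) (by omega)) (nd (a+1) a (by omega))
          (nd (a+1) (a+2) (by omega)) (nd (a+2) a (by omega)) (nd (a+2) (a+1) (by omega))
          (ed a (a+1) (by omega)) (ed a (a+2) (by omega)) (ed (a+1) a (by omega))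
          (ed (a+1) (a+2) (by omega)) (ed (a+2) a (by omega)) (ed (a+2) (a+1) (by omega))
      · left
        have hseg : IsVSeg ((Finset.Icc y' y).image (fun t => (a, t))) :=
          ⟨a, y', y, by omega, rfl⟩
        have hsub : (Finset.Icc y' y).image (fun t => (a, t)) ⊆ P := by
          intro p hp
          obtain ⟨h1, h2, h3⟩ := S8_mem_vseg.mp hp
          have : p = (a, p.2) := Prod.ext h3 rfl
          rw [this]
          exact hbad a p.2 (by omega) (by omega) h1 h2
        obtain ⟨V, hV, hSV⟩ := S8_exists_maxV hseg hsub
        have hV3 : 3 ≤ V.card := by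
          have := Finset.card_le_card hSV
          rw [S8_card_vseg] at this
          omega
        have hJ3 : 3 ≤ J.card := by rw [hJeq, S8_card_hseg]; omega
        exact S8_perp hJ hV hJ3 hV3
    · left
      push_neg at hbad
      obtain ⟨u, t, hu1, hu2, ht1, ht2, htP⟩ := hbad
      obtain ⟨p, q, hp1, hp2, hp3, hp4, hp5, hp6, hp7⟩ :
          ∃ p q : ℤ, p ≠ u ∧ q ≠ u ∧ p ≠ q ∧ a ≤ p ∧ p ≤ a + 2 ∧ a ≤ q ∧ q ≤ a + 2 := by
        by_cases h1 : u = a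
        · exact ⟨a + 1, a + 2, by omega⟩
        · by_cases h2 : u = a + 1
          · exact ⟨a, a + 2, by omega⟩
          · exact ⟨a, a + 1, by omega⟩
      have mJ1 : (u, y) ∈ J := by rw [hJeq]; exact S8_mem_hseg.mpr ⟨hu1, hu2, rfl⟩
      have mJ2 : (p, y) ∈ J := by rw [hJeq]; exact S8_mem_hseg.mpr ⟨hp4, hp5, rfl⟩
      have mI1 : (u, y') ∈ I := by rw [hIeq]; exact S8_mem_hseg.mpr ⟨hu1, hu2, rfl⟩
      have mI2 : (q, y') ∈ I := by rw [hIeq]; exact S8_mem_hseg.mpr ⟨hp6, hp7, rfl⟩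
      have hA : Attacks P (u, y) (p, y) :=
        S8_attack_of_interval (Or.inl hJ) mJ1 mJ2 (fun h => hp1 (congrArg Prod.fst h).symm)
      have hB : Attacks P (u, y') (q, y') :=
        S8_attack_of_interval (Or.inl hI) mI1 mI2 (fun h => hp2 (congrArg Prod.fst h).symm)
      refine S8_cycle4 hA hB ?_ ?_ ?_ ?_ ?_ ?_ ?_ ?_
      · exact S8_nonattack_col_gap (x := u) (t := t) (fun h => hyne h.symm)
          (by omega) (by omega) htP
      · exact S8_nonattack_diag (fun h => hp2 h.symm) (fun h => hyne h.symm)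
      · exact S8_nonattack_diag hp1 (fun h => hyne h.symm)
      · exact S8_nonattack_diag hp3 (fun h => hyne h.symm)
      · exact fun h => hyne (congrArg Prod.snd h).symm
      · exact fun h => hp2 (congrArg Prod.fst h).symm
      · exact fun h => hp1 (congrArg Prod.fst h)
      · exact fun h => hp3 (congrArg Prod.fst h)
  · left
    obtain ⟨u1, u2, v1, v2, k1, k2, k3, k4, k5, k6, k7, k8, k9, k10⟩ :
        ∃ u1 u2 v1 v2 : ℤ, a ≤ u1 ∧ u1 < u2 ∧ u2 ≤ b ∧ a' ≤ v1 ∧ v1 < v2 ∧ v2 ≤ b' ∧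
          u1 ≠ v1 ∧ u1 ≠ v2 ∧ u2 ≠ v1 ∧ u2 ≠ v2 := by
      rcases lt_trichotomy a a' with h | h | h
      · exact ⟨a, a + 1, b' - 1, b', by omega⟩
      · rcases lt_trichotomy b b' with h2 | h2 | h2
        · exact ⟨a, a + 1, b' - 1, b', by omega⟩
        · have hne : b ≠ a + 2 := fun hb => hsame ⟨h, h2, hb⟩
          exact ⟨a, a + 1, a + 2, a + 3, by omega⟩
        · exact ⟨b - 1, b, a', a' + 1, by omega⟩
      · exact ⟨b - 1, b, a', a' + 1, by omega⟩
    have mJ1 : (u1, y) ∈ J := by rw [hJeq]; exact S8_mem_hseg.mpr ⟨k1, by omega, rfl⟩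
    have mJ2 : (u2, y) ∈ J := by rw [hJeq]; exact S8_mem_hseg.mpr ⟨by omega, k3, rfl⟩
    have mI1 : (v1, y') ∈ I := by rw [hIeq]; exact S8_mem_hseg.mpr ⟨k4, by omega, rfl⟩
    have mI2 : (v2, y') ∈ I := by rw [hIeq]; exact S8_mem_hseg.mpr ⟨by omega, k6, rfl⟩
    have hA : Attacks P (u1, y) (u2, y) :=
      S8_attack_of_interval (Or.inl hJ) mJ1 mJ2 (fun h => by
        have h2 : _ = _ := congrArg Prod.fst h; omega)
    have hB : Attacks P (v1, y') (v2, y') :=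
      S8_attack_of_interval (Or.inl hI) mI1 mI2 (fun h => by
        have h2 : _ = _ := congrArg Prod.fst h; omega)
    exact S8_cycle4 hA hB
      (S8_nonattack_diag k7 (fun h => hyne h.symm))
      (S8_nonattack_diag k8 (fun h => hyne h.symm))
      (S8_nonattack_diag k9 (fun h => hyne h.symm))
      (S8_nonattack_diag k10 (fun h => hyne h.symm))
      (fun h => k7 (congrArg Prod.fst h)) (fun h => k8 (congrArg Prod.fst h))
      (fun h => k9 (congrArg Prod.fst h)) (fun h => k10 (congrArg Prod.fst h))

lemma S8_parH {P J I : Finset Cell} (hJ : IsMaxHInterval P J) (hI : IsMaxHInterval P I)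
    (hIJ : I ≠ J) (hJ3 : 3 ≤ J.card) (hI3 : 3 ≤ I.card) :
    HasInducedCycle (GBar P) 4 ∨ HasInducedCycle (GBar P) 6 := by
  obtain ⟨yJ, a, b, hab, hJeq⟩ := hJ.1
  obtain ⟨yI, a', b', hab', hIeq⟩ := hI.1
  have hb : a + 2 ≤ b := by rw [hJeq, S8_card_hseg] at hJ3; omega
  have hb' : a' + 2 ≤ b' := by rw [hIeq, S8_card_hseg] at hI3; omega
  rcases lt_trichotomy yI yJ with hy | hy | hy
  · exact S8_parH_aux hJ hI hJeq hIeq hb hb' hy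
  · -- same row
    left
    subst hy
    have hd : ∀ p q : Cell, p ∈ J → q ∈ I → p ≠ q := by
      intro p q hp hq h
      subst h
      exact hIJ (S8_maxH_unique hI hJ hq hp)
    have mJ1 : (a, yI) ∈ J := by rw [hJeq]; exact S8_mem_hseg.mpr ⟨le_refl _, by omega, rfl⟩
    have mJ2 : (a + 1, yI) ∈ J := by rw [hJeq]; exact S8_mem_hseg.mpr ⟨by omega, by omega, rfl⟩
    have mI1 : (a', yI) ∈ I := by rw [hIeq]; exact S8_mem_hseg.mpr ⟨le_refl _, by omega, rfl⟩
    have mI2 : (a' + 1, yI) ∈ I := by rw [hIeq]; exact S8_mem_hseg.mpr ⟨by omega, by omega, rfl⟩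
    have hA : Attacks P (a, yI) (a + 1, yI) :=
      S8_attack_of_interval (Or.inl hJ) mJ1 mJ2 (fun h => by
        have h2 : _ = _ := congrArg Prod.fst h; omega)
    have hB : Attacks P (a', yI) (a' + 1, yI) :=
      S8_attack_of_interval (Or.inl hI) mI1 mI2 (fun h => by
        have h2 : _ = _ := congrArg Prod.fst h; omega)
    have hn : ∀ p q : Cell, p ∈ J → q ∈ I → p.2 = q.2 → ¬ Attacks P p q :=
      fun p q hp hq hr => S8_nonattack_two_maxH hJ hI (fun h => hIJ h.symm) hp hq hr
    exact S8_cycle4 hA hB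
      (hn _ _ mJ1 mI1 rfl) (hn _ _ mJ1 mI2 rfl) (hn _ _ mJ2 mI1 rfl) (hn _ _ mJ2 mI2 rfl)
      (hd _ _ mJ1 mI1) (hd _ _ mJ1 mI2) (hd _ _ mJ2 mI1) (hd _ _ mJ2 mI2)
  · exact S8_parH_aux hI hJ hIeq hJeq hb' hb hy

end S8E
section S8F

def S8sw (c : Cell) : Cell := (c.2, c.1)

lemma S8sw_inj : Function.Injective S8sw := by
  intro a b h
  exact Prod.ext (congrArg Prod.snd h) (congrArg Prod.fst h)

lemma S8sw_image_image (S : Finset Cell) : (S.image S8sw).image S8sw = S := by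
  rw [Finset.image_image]
  have : S8sw ∘ S8sw = id := funext (fun c => rfl)
  rw [this, Finset.image_id]

lemma S8_isHSeg_sw {S : Finset Cell} (h : IsHSeg S) : IsVSeg (S.image S8sw) := by
  obtain ⟨y, a, b, hab, rfl⟩ := h
  exact ⟨y, a, b, hab, by rw [Finset.image_image]; rfl⟩

lemma S8_isVSeg_sw {S : Finset Cell} (h : IsVSeg S) : IsHSeg (S.image S8sw) := by
  obtain ⟨x, a, b, hab, rfl⟩ := h
  exact ⟨x, a, b, hab, by rw [Finset.image_image]; rfl⟩

lemma S8_maxH_sw {P I : Finset Cell} (h : IsMaxHInterval P I) :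
    IsMaxVInterval (P.image S8sw) (I.image S8sw) := by
  obtain ⟨hseg, hsub, hmax⟩ := h
  refine ⟨S8_isHSeg_sw hseg, Finset.image_subset_image hsub, ?_⟩
  intro K hK hKP hIK
  have h1 : IsHSeg (K.image S8sw) := S8_isVSeg_sw hK
  have h2 : K.image S8sw ⊆ P := by
    have := Finset.image_subset_image (f := S8sw) hKP
    rwa [S8sw_image_image] at this
  have h3 : I ⊆ K.image S8sw := by
    have := Finset.image_subset_image (f := S8sw) hIK
    rwa [S8sw_image_image] at this
  have := hmax _ h1 h2 h3
  rw [← this, S8sw_image_image]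

lemma S8_maxV_sw {P I : Finset Cell} (h : IsMaxVInterval P I) :
    IsMaxHInterval (P.image S8sw) (I.image S8sw) := by
  obtain ⟨hseg, hsub, hmax⟩ := h
  refine ⟨S8_isVSeg_sw hseg, Finset.image_subset_image hsub, ?_⟩
  intro K hK hKP hIK
  have h1 : IsVSeg (K.image S8sw) := S8_isHSeg_sw hK
  have h2 : K.image S8sw ⊆ P := by
    have := Finset.image_subset_image (f := S8sw) hKP
    rwa [S8sw_image_image] at this
  have h3 : I ⊆ K.image S8sw := by
    have := Finset.image_subset_image (f := S8sw) hIK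
    rwa [S8sw_image_image] at this
  have := hmax _ h1 h2 h3
  rw [← this, S8sw_image_image]

lemma S8_maxInterval_sw {P I : Finset Cell} (h : IsMaxInterval P I) :
    IsMaxInterval (P.image S8sw) (I.image S8sw) := by
  rcases h with h | h
  · exact Or.inr (S8_maxH_sw h)
  · exact Or.inl (S8_maxV_sw h)

lemma S8_attacks_sw {P : Finset Cell} {c d : Cell} (h : Attacks P c d) :
    Attacks (P.image S8sw) (S8sw c) (S8sw d) := by
  obtain ⟨hne, K, hK, hc, hd⟩ := h
  exact ⟨fun e => hne (S8sw_inj e), K.image S8sw, S8_maxInterval_sw hK,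
    Finset.mem_image_of_mem _ hc, Finset.mem_image_of_mem _ hd⟩

lemma S8_attacks_sw_iff {P : Finset Cell} {c d : Cell} :
    Attacks (P.image S8sw) c d ↔ Attacks P (S8sw c) (S8sw d) := by
  constructor
  · intro h
    have := S8_attacks_sw h
    rwa [S8sw_image_image] at this
  · intro h
    have := S8_attacks_sw h
    exact this

lemma S8_cycle_sw {P : Finset Cell} {n : ℕ}
    (h : HasInducedCycle (GBar (P.image S8sw)) n) : HasInducedCycle (GBar P) n := by
  obtain ⟨hn, f, hinj, hspec⟩ := h
  have hmem : ∀ i, S8sw ((f i) : Cell) ∈ P := by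
    intro i
    obtain ⟨q, hq, hqe⟩ := Finset.mem_image.mp (f i).2
    rw [← hqe]
    exact hq
  refine ⟨hn, fun i => ⟨S8sw ((f i) : Cell), hmem i⟩, ?_, ?_⟩
  · intro i j hij
    apply hinj
    have := congrArg Subtype.val hij
    exact Subtype.ext (S8sw_inj this)
  · intro i j
    rw [← hspec i j]
    constructor
    · rintro ⟨h1, h2⟩
      refine ⟨fun e => h1 (Subtype.ext (congrArg (fun z : {c // c ∈ P.image S8sw} => S8sw (z : Cell)) e)), fun ha => h2 ?_⟩
      show Attacks P _ _
      exact S8_attacks_sw_iff.mp ha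
    · rintro ⟨h1, h2⟩
      refine ⟨fun e => h1 (Subtype.ext (S8sw_inj (congrArg Subtype.val e))), fun ha => h2 ?_⟩
      show Attacks (P.image S8sw) _ _
      exact S8_attacks_sw_iff.mpr ha

end S8F

/-- If `Ḡ_P` is chordal and `J` is a maximal interval with at least 3 cells,
then every other maximal interval has at most 2 cells. -/
theorem statement8 (P : Finset Cell) (hP : IsPolyomino P)
    (hch : IsChordal (GBar P))
    (J : Finset Cell) (hJ : IsMaxInterval P J) (hJ3 : 3 ≤ J.card)
    (I : Finset Cell) (hI : IsMaxInterval P I) (hIJ : I ≠ J) :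
    I.card ≤ 2 := by
  by_contra hcon
  have hI3 : 3 ≤ I.card := by omega
  have hcyc : HasInducedCycle (GBar P) 4 ∨ HasInducedCycle (GBar P) 6 := by
    rcases hJ with hJH | hJV
    · rcases hI with hIH | hIV
      · exact S8_parH hJH hIH hIJ hJ3 hI3
      · exact Or.inl (S8_perp hJH hIV hJ3 hI3)
    · rcases hI with hIH | hIV
      · exact Or.inl (S8_perp hIH hJV hI3 hJ3)
      · have hJ' := S8_maxV_sw hJV
        have hI' := S8_maxV_sw hIV
        have hIJ' : I.image S8sw ≠ J.image S8sw := by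
          intro e
          exact hIJ (Finset.image_injective S8sw_inj e)
        have hJc : 3 ≤ (J.image S8sw).card := by
          rwa [Finset.card_image_of_injective _ S8sw_inj]
        have hIc : 3 ≤ (I.image S8sw).card := by
          rwa [Finset.card_image_of_injective _ S8sw_inj]
        rcases S8_parH hJ' hI' hIJ' hJc hIc with h | h
        · exact Or.inl (S8_cycle_sw h)
        · exact Or.inr (S8_cycle_sw h)
  rcases hcyc with h | h
  · exact hch 4 (by norm_num) h
  · exact hch 6 (by norm_num) h
end

section
/- Let P be a pure brush polyomino with handle J, |J| = d, and bristles I_1,…,I_d with ℓ_k = |I_k|. Then for every 1 ≤ k ≤ d, the number of k-element sets of pairwise non-attacking cells of P equals e_k(ℓ_1−1,…,ℓ_d−1) + (d−k+1) · e_{k−1}(ℓ_1−1,…,ℓ_d−1). -/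
open Finset

variable {α ι : Type*} [DecidableEq α] [DecidableEq ι]

/-- Counting: sets with ≤1 element per block, card k. -/
lemma countA (C : ι → Finset α)
    (hd : ∀ i j, i ≠ j → Disjoint (C i) (C j)) (s : Finset ι) :
    ∀ k : ℕ,
    ((s.biUnion C).powerset.filter
      (fun F => F.card = k ∧ ∀ j ∈ s, (F ∩ C j).card ≤ 1)).card
    = ∑ T ∈ s.powersetCard k, ∏ j ∈ T, (C j).card := by
  induction s using Finset.induction_on with
  | empty =>
    intro k
    cases k with
    | zero =>
      rw [show (Finset.powersetCard 0 (∅ : Finset ι)) = {∅} by simp]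
      simp only [biUnion_empty, powerset_empty]
      rw [show ({∅} : Finset (Finset α)).filter _ = {∅} from by
        ext F; simp +contextual]
      simp
    | succ k =>
      simp only [biUnion_empty, powerset_empty]
      rw [Finset.filter_eq_empty_iff.mpr (by rintro F hF; simp at hF; subst hF; simp)]
      rw [Finset.powersetCard_eq_empty.mpr (by simp)]
      simp
  | @insert a s ha ih =>
    intro k
    have hCdisj : ∀ j ∈ s, Disjoint (C a) (C j) := fun j hj => hd a j (fun h => ha (h ▸ hj))
    -- key: F in the new family not meeting C a iff F in old family
    have hX0 : ((insert a s).biUnion C).powerset.filter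
        (fun F => (F.card = k ∧ ∀ j ∈ insert a s, (F ∩ C j).card ≤ 1) ∧ F ∩ C a = ∅)
        = (s.biUnion C).powerset.filter
        (fun F => F.card = k ∧ ∀ j ∈ s, (F ∩ C j).card ≤ 1) := by
      ext F
      simp only [mem_filter, mem_powerset, mem_insert]
      constructor
      · rintro ⟨hsub, ⟨hcard, hle⟩, hFa⟩
        refine ⟨fun c hc => ?_, hcard, fun j hj => hle j (Or.inr hj)⟩
        have := hsub hc
        rw [mem_biUnion] at this ⊢
        obtain ⟨j, hj, hcj⟩ := this
        rcases mem_insert.mp hj with rfl | hj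
        · exact absurd (mem_inter.mpr ⟨hc, hcj⟩) (by simp [hFa])
        · exact ⟨j, hj, hcj⟩
      · rintro ⟨hsub, hcard, hle⟩
        have hFa : F ∩ C a = ∅ := by
          rw [eq_empty_iff_forall_notMem]
          rintro c hc
          rw [mem_inter] at hc
          obtain ⟨j, hj, hcj⟩ := mem_biUnion.mp (hsub hc.1)
          exact disjoint_left.mp (hCdisj j hj) hc.2 hcj
        refine ⟨hsub.trans (biUnion_subset_biUnion_of_subset_left C (subset_insert a s)),
          ⟨hcard, fun j hj => ?_⟩, hFa⟩
        rcases hj with rfl | hj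
        · simp [hFa]
        · exact hle j hj
    cases k with
    | zero =>
      -- only F = ∅
      have : ∀ (t : Finset ι), ((t.biUnion C).powerset.filter
          (fun F => F.card = 0 ∧ ∀ j ∈ t, (F ∩ C j).card ≤ 1)).card = 1 := by
        intro t
        rw [show (t.biUnion C).powerset.filter
            (fun F => F.card = 0 ∧ ∀ j ∈ t, (F ∩ C j).card ≤ 1) = {∅} from by
          ext F
          simp only [mem_filter, mem_powerset, mem_singleton, Finset.card_eq_zero]
          constructor
          · rintro ⟨-, rfl, -⟩; rfl
          · rintro rfl; simp]
        simp
      rw [this]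
      rw [show (Finset.powersetCard 0 (insert a s)) = {∅} by simp]
      simp
    | succ k =>
      -- split by whether F meets C a
      rw [← Finset.card_filter_add_card_filter_not
        (p := fun F => F ∩ C a = ∅)
        (s := ((insert a s).biUnion C).powerset.filter
          (fun F => F.card = k+1 ∧ ∀ j ∈ insert a s, (F ∩ C j).card ≤ 1))]
      rw [Finset.filter_filter, Finset.filter_filter]
      rw [hX0, ih (k+1)]
      -- second part: bijection with (C a) ×ˢ (old family at k)
      have hbij : ((C a) ×ˢ ((s.biUnion C).powerset.filter
            (fun F => F.card = k ∧ ∀ j ∈ s, (F ∩ C j).card ≤ 1))).card =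
          (((insert a s).biUnion C).powerset.filter
            (fun F => (F.card = k+1 ∧ ∀ j ∈ insert a s, (F ∩ C j).card ≤ 1) ∧
              ¬ F ∩ C a = ∅)).card := by
        apply Finset.card_bij (fun p _ => insert p.1 p.2)
        · rintro ⟨c, F⟩ hp
          rw [mem_product, mem_filter, mem_powerset] at hp
          obtain ⟨hc, hsub, hcard, hle⟩ := hp
          have hcF : c ∉ F := by
            intro hcF
            obtain ⟨j, hj, hcj⟩ := mem_biUnion.mp (hsub hcF)
            exact disjoint_left.mp (hCdisj j hj) hc hcj
          have hFa : F ∩ C a = ∅ := by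
            rw [eq_empty_iff_forall_notMem]
            rintro x hx
            rw [mem_inter] at hx
            obtain ⟨j, hj, hcj⟩ := mem_biUnion.mp (hsub hx.1)
            exact disjoint_left.mp (hCdisj j hj) hx.2 hcj
          rw [mem_filter, mem_powerset]
          refine ⟨?_, ⟨?_, ?_⟩, ?_⟩
          · intro x hx
            rcases mem_insert.mp hx with rfl | hx
            · exact mem_biUnion.mpr ⟨a, mem_insert_self a s, hc⟩
            · exact biUnion_subset_biUnion_of_subset_left C (subset_insert a s) (hsub hx)
          · rw [card_insert_of_notMem hcF, hcard]
          · intro j hj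
            rcases mem_insert.mp hj with rfl | hj
            · have : insert c F ∩ C j = {c} := by
                ext x
                simp only [mem_inter, mem_insert, mem_singleton]
                constructor
                · rintro ⟨rfl | hx, hx2⟩
                  · rfl
                  · exact absurd (mem_inter.mpr ⟨hx, hx2⟩) (by simp [hFa])
                · rintro rfl; exact ⟨Or.inl rfl, hc⟩
              simp [this]
            · have hca : c ∉ C j := disjoint_left.mp (hCdisj j hj) hc
              have : insert c F ∩ C j = F ∩ C j := by
                ext x
                simp only [mem_inter, mem_insert]
                constructor
                · rintro ⟨rfl | hx, hx2⟩
                  · exact absurd hx2 hca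
                  · exact ⟨hx, hx2⟩
                · exact fun ⟨h1, h2⟩ => ⟨Or.inr h1, h2⟩
              rw [this]; exact hle j hj
          · intro h
            rw [eq_empty_iff_forall_notMem] at h
            exact h c (mem_inter.mpr ⟨mem_insert_self c F, hc⟩)
        · rintro ⟨c, F⟩ hp ⟨c', F'⟩ hp' heq
          rw [mem_product, mem_filter, mem_powerset] at hp hp'
          obtain ⟨hc, hsub, -, -⟩ := hp
          obtain ⟨hc', hsub', -, -⟩ := hp'
          have hFa : ∀ x ∈ F, x ∉ C a := by
            intro x hx hxa
            obtain ⟨j, hj, hcj⟩ := mem_biUnion.mp (hsub hx)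
            exact disjoint_left.mp (hCdisj j hj) hxa hcj
          have hFa' : ∀ x ∈ F', x ∉ C a := by
            intro x hx hxa
            obtain ⟨j, hj, hcj⟩ := mem_biUnion.mp (hsub' hx)
            exact disjoint_left.mp (hCdisj j hj) hxa hcj
          have hcc : c = c' := by
            have : c ∈ insert c' F' := heq ▸ mem_insert_self c F
            rcases mem_insert.mp this with rfl | h
            · rfl
            · exact absurd hc (hFa' c h)
          subst hcc
          have hF : F = F' := by
            have h1 : c ∉ F := fun h => hFa c h hc
            have h2 : c ∉ F' := fun h => hFa' c h hc
            have := congrArg (·.erase c) heq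
            simpa [erase_insert h1, erase_insert h2] using this
          rw [hF]
        · intro F hF
          rw [mem_filter, mem_powerset] at hF
          obtain ⟨hsub, ⟨hcard, hle⟩, hne⟩ := hF
          obtain ⟨c, hc⟩ := nonempty_iff_ne_empty.mpr hne
          rw [mem_inter] at hc
          refine ⟨⟨c, F.erase c⟩, ?_, ?_⟩
          · rw [mem_product, mem_filter, mem_powerset]
            refine ⟨hc.2, ?_, ?_, ?_⟩
            · intro x hx
              rw [mem_erase] at hx
              obtain ⟨j, hj, hcj⟩ := mem_biUnion.mp (hsub hx.2)
              rcases mem_insert.mp hj with rfl | hj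
              · exfalso
                have h1 : (F ∩ C j).card ≤ 1 := hle j (mem_insert_self j s)
                have hx1 : x ∈ F ∩ C j := mem_inter.mpr ⟨hx.2, hcj⟩
                have hx2 : c ∈ F ∩ C j := mem_inter.mpr hc
                exact hx.1 (Finset.card_le_one.mp h1 x hx1 c hx2)
              · exact mem_biUnion.mpr ⟨j, hj, hcj⟩
            · rw [card_erase_of_mem hc.1, hcard]; rfl
            · intro j hj
              exact le_trans (card_le_card (inter_subset_inter (erase_subset c F) le_rfl))
                (hle j (mem_insert.mpr (Or.inr hj)))
          · exact insert_erase hc.1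
      rw [← hbij, card_product, ih k]
      -- now the symmetric function identity
      have hdisj2 : Disjoint (Finset.powersetCard (k+1) s)
          ((Finset.powersetCard k s).image (insert a)) := by
        rw [Finset.disjoint_left]
        intro T hT hT'
        obtain ⟨T', hT'2, rfl⟩ := mem_image.mp hT'
        exact ha ((mem_powersetCard.mp hT).1 (mem_insert_self a T'))
      have hinj2 : ∀ T ∈ Finset.powersetCard k s, ∀ T' ∈ Finset.powersetCard k s,
          insert a T = insert a T' → T = T' := by
        intro T hT T' hT' h
        have haT : a ∉ T := fun hh => ha ((mem_powersetCard.mp hT).1 hh)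
        have haT' : a ∉ T' := fun hh => ha ((mem_powersetCard.mp hT').1 hh)
        have := congrArg (·.erase a) h
        simpa [erase_insert haT, erase_insert haT'] using this
      rw [show (k+1 : ℕ) = Nat.succ k from rfl, Finset.powersetCard_succ_insert ha,
        Finset.sum_union hdisj2, Finset.sum_image hinj2]
      congr 1
      rw [Finset.mul_sum]
      apply Finset.sum_congr rfl
      intro T hT
      have haT : a ∉ T := fun h => ha ((mem_powersetCard.mp hT).1 h)
      rw [Finset.prod_insert haT]

lemma erase_ppc {d m : ℕ} (j0 : Fin d) :
    Finset.powersetCard m ((univ : Finset (Fin d)).erase j0)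
      = (Finset.powersetCard m (univ : Finset (Fin d))).filter (fun T => j0 ∉ T) := by
  ext T
  simp only [mem_powersetCard, mem_filter, Finset.subset_erase]
  tauto

lemma sum_erase_ppc {d m : ℕ} (x : Fin d → ℕ) :
    ∑ j0 : Fin d, ∑ T ∈ Finset.powersetCard m ((univ : Finset (Fin d)).erase j0), ∏ j ∈ T, x j
      = (d - m) * ∑ T ∈ Finset.powersetCard m (univ : Finset (Fin d)), ∏ j ∈ T, x j := by
  have h1 : ∀ j0 : Fin d, ∑ T ∈ Finset.powersetCard m ((univ : Finset (Fin d)).erase j0),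
      ∏ j ∈ T, x j = ∑ T ∈ Finset.powersetCard m (univ : Finset (Fin d)),
        if j0 ∉ T then ∏ j ∈ T, x j else 0 := by
    intro j0
    rw [erase_ppc, Finset.sum_filter]
  simp only [h1]
  rw [Finset.sum_comm]
  rw [Finset.mul_sum]
  apply Finset.sum_congr rfl
  intro T hT
  rw [Finset.sum_ite, Finset.sum_const, Finset.sum_const, smul_eq_mul, smul_eq_mul,
    mul_zero, add_zero]
  congr 1
  have hTcard : T.card = m := (mem_powersetCard.mp hT).2
  have : (univ : Finset (Fin d)).filter (fun j0 => j0 ∉ T) = univ \ T := by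
    ext j; simp [Finset.mem_sdiff]
  rw [this, Finset.card_sdiff_of_subset (subset_univ T), hTcard, Finset.card_univ, Fintype.card_fin]

lemma count_main {d : ℕ} (B : Fin d → Finset α) (w : Fin d → α)
    (hw : ∀ j, w j ∈ B j) (hdisj : ∀ i j, i ≠ j → Disjoint (B i) (B j))
    (k : ℕ) (hk1 : 1 ≤ k) :
    ((Finset.univ.biUnion B).powerset.filter
      (fun F => F.card = k ∧ (∀ j, (F ∩ B j).card ≤ 1) ∧
        (F ∩ Finset.univ.image w).card ≤ 1)).card
    = (∑ T ∈ Finset.powersetCard k (univ : Finset (Fin d)), ∏ j ∈ T, ((B j).card - 1))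
      + ∑ j0 : Fin d, ∑ T ∈ Finset.powersetCard (k-1) ((univ : Finset (Fin d)).erase j0),
          ∏ j ∈ T, ((B j).card - 1) := by
  classical
  set W := (univ : Finset (Fin d)).image w with hWdef
  set C := fun j => (B j).erase (w j) with hCdef
  have hCsub : ∀ j, C j ⊆ B j := fun j => erase_subset _ _
  have hCd : ∀ i j, i ≠ j → Disjoint (C i) (C j) := fun i j hij =>
    (hdisj i j hij).mono (hCsub i) (hCsub j)
  have winj : Function.Injective w := by
    intro i j hij
    by_contra hne
    exact disjoint_left.mp (hdisj i j hne) (hw i) (hij ▸ hw j)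
  have hWC : ∀ i j, w i ∉ C j := by
    intro i j h
    rcases eq_or_ne i j with rfl | hne
    · exact (mem_erase.mp h).1 rfl
    · exact disjoint_left.mp (hdisj i j hne) (hw i) (hCsub j h)
  have hCcard : ∀ j, (C j).card = (B j).card - 1 := fun j => card_erase_of_mem (hw j)
  -- split
  rw [← Finset.card_filter_add_card_filter_not (p := fun F => F ∩ W = ∅)
    (s := (Finset.univ.biUnion B).powerset.filter
      (fun F => F.card = k ∧ (∀ j, (F ∩ B j).card ≤ 1) ∧ (F ∩ W).card ≤ 1))]
  rw [Finset.filter_filter, Finset.filter_filter]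
  congr 1
  · -- part with no w-cell
    have hX0 : (Finset.univ.biUnion B).powerset.filter
        (fun F => (F.card = k ∧ (∀ j, (F ∩ B j).card ≤ 1) ∧ (F ∩ W).card ≤ 1) ∧ F ∩ W = ∅)
        = ((univ : Finset (Fin d)).biUnion C).powerset.filter
        (fun F => F.card = k ∧ ∀ j ∈ (univ : Finset (Fin d)), (F ∩ C j).card ≤ 1) := by
      ext F
      simp only [mem_filter, mem_powerset, mem_univ, forall_true_left]
      constructor
      · rintro ⟨hsub, ⟨hcard, hB, -⟩, hFW⟩
        refine ⟨fun c hc => ?_, hcard, fun j => ?_⟩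
        · obtain ⟨j, -, hcj⟩ := mem_biUnion.mp (hsub hc)
          refine mem_biUnion.mpr ⟨j, mem_univ j, mem_erase.mpr ⟨?_, hcj⟩⟩
          rintro rfl
          exact (eq_empty_iff_forall_notMem.mp hFW (w j))
            (mem_inter.mpr ⟨hc, mem_image.mpr ⟨j, mem_univ j, rfl⟩⟩)
        · exact le_trans (card_le_card (inter_subset_inter le_rfl (hCsub j))) (hB j)
      · rintro ⟨hsub, hcard, hC⟩
        have hFW : F ∩ W = ∅ := by
          rw [eq_empty_iff_forall_notMem]
          rintro c hc
          rw [mem_inter] at hc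
          obtain ⟨i, -, rfl⟩ := mem_image.mp hc.2
          obtain ⟨j, -, hcj⟩ := mem_biUnion.mp (hsub hc.1)
          exact hWC i j hcj
        have hBC : ∀ j, F ∩ B j = F ∩ C j := by
          intro j
          refine Finset.Subset.antisymm (fun c hc => ?_)
            (inter_subset_inter le_rfl (hCsub j))
          rw [mem_inter] at hc
          obtain ⟨i, -, hci⟩ := mem_biUnion.mp (hsub hc.1)
          have : i = j := by
            by_contra hne
            exact disjoint_left.mp (hdisj i j hne) (hCsub i hci) hc.2
          subst this
          exact mem_inter.mpr ⟨hc.1, hci⟩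
        refine ⟨fun c hc => ?_, ⟨hcard, fun j => ?_, by simp [hFW]⟩, hFW⟩
        · obtain ⟨j, -, hcj⟩ := mem_biUnion.mp (hsub hc)
          exact mem_biUnion.mpr ⟨j, mem_univ j, hCsub j hcj⟩
        · rw [hBC j]; exact hC j
    rw [hX0]
    have hc := countA C hCd univ k
    have h2 : ∑ T ∈ Finset.powersetCard k (univ : Finset (Fin d)), ∏ j ∈ T, (C j).card
        = ∑ T ∈ Finset.powersetCard k (univ : Finset (Fin d)), ∏ j ∈ T, ((B j).card - 1) :=
      Finset.sum_congr rfl (fun T _ => Finset.prod_congr rfl (fun j _ => hCcard j))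
    rw [← h2]
    convert hc using 2 <;> congr
  · -- part with exactly one w-cell
    have hbij : ((univ : Finset (Fin d)).sigma (fun j0 =>
        (((univ : Finset (Fin d)).erase j0).biUnion C).powerset.filter
          (fun F => F.card = k - 1 ∧
            ∀ j ∈ (univ : Finset (Fin d)).erase j0, (F ∩ C j).card ≤ 1))).card
        = ((Finset.univ.biUnion B).powerset.filter
        (fun F => (F.card = k ∧ (∀ j, (F ∩ B j).card ≤ 1) ∧ (F ∩ W).card ≤ 1) ∧
          ¬ F ∩ W = ∅)).card := by
      apply Finset.card_bij (fun p _ => insert (w p.1) p.2)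
      · rintro ⟨j0, F⟩ hp
        simp only [mem_sigma, mem_filter, mem_powerset] at hp
        obtain ⟨-, hsub, hcard, hle⟩ := hp
        have hwF : ∀ i, w i ∉ F := by
          intro i hi
          obtain ⟨j, -, hcj⟩ := mem_biUnion.mp (hsub hi)
          exact hWC i j hcj
        have hFB : ∀ j, F ∩ B j ⊆ F ∩ C j := by
          intro j
          intro c hc
          rw [mem_inter] at hc
          obtain ⟨i, -, hci⟩ := mem_biUnion.mp (hsub hc.1)
          have : i = j := by
            by_contra hne
            exact disjoint_left.mp (hdisj i j hne) (hCsub i hci) hc.2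
          subst this
          exact mem_inter.mpr ⟨hc.1, hci⟩
        have hFj0 : F ∩ B j0 = ∅ := by
          rw [eq_empty_iff_forall_notMem]
          intro c hc
          rw [mem_inter] at hc
          obtain ⟨i, hi, hci⟩ := mem_biUnion.mp (hsub hc.1)
          have hij0 : i ≠ j0 := (mem_erase.mp hi).1
          exact disjoint_left.mp (hdisj i j0 hij0) (hCsub i hci) hc.2
        rw [mem_filter, mem_powerset]
        have hFW2 : insert (w j0) F ∩ W = {w j0} := by
          ext c
          simp only [mem_inter, mem_insert, mem_singleton]
          constructor
          · rintro ⟨rfl | hc, hc2⟩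
            · rfl
            · obtain ⟨i, -, rfl⟩ := mem_image.mp hc2
              exact absurd hc (hwF i)
          · rintro rfl
            exact ⟨Or.inl rfl, mem_image.mpr ⟨j0, mem_univ j0, rfl⟩⟩
        refine ⟨?_, ⟨?_, fun j => ?_, ?_⟩, ?_⟩
        · intro c hc
          rcases mem_insert.mp hc with rfl | hc
          · exact mem_biUnion.mpr ⟨j0, mem_univ j0, hw j0⟩
          · obtain ⟨j, -, hcj⟩ := mem_biUnion.mp (hsub hc)
            exact mem_biUnion.mpr ⟨j, mem_univ j, hCsub j hcj⟩
        · rw [card_insert_of_notMem (hwF j0), hcard]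
          omega
        · rcases eq_or_ne j j0 with rfl | hne
          · have : insert (w j) F ∩ B j = {w j} := by
              ext c
              simp only [mem_inter, mem_insert, mem_singleton]
              constructor
              · rintro ⟨rfl | hc, hc2⟩
                · rfl
                · exact absurd (mem_inter.mpr ⟨hc, hc2⟩) (by simp [hFj0])
              · rintro rfl
                exact ⟨Or.inl rfl, hw j⟩
            simp [this]
          · have : insert (w j0) F ∩ B j = F ∩ B j := by
              ext c
              simp only [mem_inter, mem_insert]
              constructor
              · rintro ⟨rfl | hc, hc2⟩
                · exact absurd hc2 (disjoint_left.mp (hdisj j0 j (Ne.symm hne)) (hw j0))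
                · exact ⟨hc, hc2⟩
              · exact fun ⟨h1, h2⟩ => ⟨Or.inr h1, h2⟩
            rw [this]
            exact le_trans (card_le_card (hFB j)) (hle j (mem_erase.mpr ⟨hne, mem_univ j⟩))
        · rw [hFW2]; simp
        · rw [hFW2]; simp
      · rintro ⟨j0, F⟩ hp ⟨j1, F'⟩ hp' heq
        simp only [mem_sigma, mem_filter, mem_powerset] at hp hp'
        obtain ⟨-, hsub, -, -⟩ := hp
        obtain ⟨-, hsub', -, -⟩ := hp'
        have hwF : ∀ i, w i ∉ F := by
          intro i hi
          obtain ⟨j, -, hcj⟩ := mem_biUnion.mp (hsub hi)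
          exact hWC i j hcj
        have hwF' : ∀ i, w i ∉ F' := by
          intro i hi
          obtain ⟨j, -, hcj⟩ := mem_biUnion.mp (hsub' hi)
          exact hWC i j hcj
        simp only at heq
        have hj : j0 = j1 := by
          have : w j1 ∈ insert (w j0) F := heq ▸ mem_insert_self (w j1) F'
          rcases mem_insert.mp this with h | h
          · exact (winj h).symm
          · exact absurd h (hwF j1)
        subst hj
        have hF : F = F' := by
          have := congrArg (·.erase (w j0)) heq
          simpa [erase_insert (hwF j0), erase_insert (hwF' j0)] using this
        rw [hF]
      · intro F hF
        simp only [mem_filter, mem_powerset] at hF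
        obtain ⟨hsub, ⟨hcard, hB, hW1⟩, hne⟩ := hF
        obtain ⟨c, hc⟩ := nonempty_iff_ne_empty.mpr hne
        rw [mem_inter] at hc
        obtain ⟨j0, -, rfl⟩ := mem_image.mp hc.2
        refine ⟨⟨j0, F.erase (w j0)⟩, ?_, insert_erase hc.1⟩
        simp only [mem_sigma, mem_filter, mem_powerset]
        refine ⟨mem_univ j0, fun x hx => ?_, ?_, fun j hj => ?_⟩
        · rw [mem_erase] at hx
          obtain ⟨j, -, hxj⟩ := mem_biUnion.mp (hsub hx.2)
          have hjj0 : j ≠ j0 := by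
            rintro rfl
            exact hx.1 (Finset.card_le_one.mp (hB j) x (mem_inter.mpr ⟨hx.2, hxj⟩)
              (w j) (mem_inter.mpr ⟨hc.1, hw j⟩))
          have hxw : x ≠ w j := by
            rintro rfl
            have h1 : w j ∈ F ∩ W := mem_inter.mpr ⟨hx.2, mem_image.mpr ⟨j, mem_univ j, rfl⟩⟩
            have h2 : w j0 ∈ F ∩ W := mem_inter.mpr ⟨hc.1, mem_image.mpr ⟨j0, mem_univ j0, rfl⟩⟩
            exact hjj0 (winj (Finset.card_le_one.mp hW1 _ h1 _ h2))
          exact mem_biUnion.mpr ⟨j, mem_erase.mpr ⟨hjj0, mem_univ j⟩,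
            mem_erase.mpr ⟨hxw, hxj⟩⟩
        · rw [card_erase_of_mem hc.1, hcard]
        · exact le_trans (card_le_card (inter_subset_inter (erase_subset _ _) (hCsub j)))
            (hB j)
    rw [← hbij, Finset.card_sigma]
    apply Finset.sum_congr rfl
    intro j0 _
    have hc := countA C hCd ((univ : Finset (Fin d)).erase j0) (k-1)
    have h2 : ∑ T ∈ Finset.powersetCard (k-1) ((univ : Finset (Fin d)).erase j0),
        ∏ j ∈ T, (C j).card
        = ∑ T ∈ Finset.powersetCard (k-1) ((univ : Finset (Fin d)).erase j0),
          ∏ j ∈ T, ((B j).card - 1) :=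
      Finset.sum_congr rfl (fun T _ => Finset.prod_congr rfl (fun j _ => hCcard j))
    rw [← h2]
    convert hc using 2 <;> congr

namespace BrushProof

def tr (c : Cell) : Cell := (c.2, c.1)

lemma tr_tr (c : Cell) : tr (tr c) = c := rfl

lemma trinj : Function.Injective tr := fun a b h => by
  have := congrArg tr h; rwa [tr_tr, tr_tr] at this

lemma image_tr_image_tr (S : Finset Cell) : (S.image tr).image tr = S := by
  rw [Finset.image_image]
  have : tr ∘ tr = id := funext tr_tr
  rw [this, Finset.image_id]

lemma mem_image_tr {S : Finset Cell} {c : Cell} : c ∈ S.image tr ↔ tr c ∈ S := by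
  constructor
  · intro h
    obtain ⟨a, ha, rfl⟩ := Finset.mem_image.mp h
    rwa [tr_tr]
  · intro h
    exact Finset.mem_image.mpr ⟨tr c, h, tr_tr c⟩

lemma mem_hseg_iff {y a b : ℤ} {p : Cell} :
    p ∈ (Finset.Icc a b).image (fun t => (t, y)) ↔ a ≤ p.1 ∧ p.1 ≤ b ∧ p.2 = y := by
  simp only [Finset.mem_image, Finset.mem_Icc, Prod.ext_iff]
  constructor
  · rintro ⟨t, ⟨h1, h2⟩, h3, h4⟩
    exact ⟨h3 ▸ h1, h3 ▸ h2, h4.symm⟩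
  · rintro ⟨h1, h2, h3⟩
    exact ⟨p.1, ⟨h1, h2⟩, rfl, h3.symm⟩

lemma mem_vseg_iff {x a b : ℤ} {p : Cell} :
    p ∈ (Finset.Icc a b).image (fun t => (x, t)) ↔ a ≤ p.2 ∧ p.2 ≤ b ∧ p.1 = x := by
  simp only [Finset.mem_image, Finset.mem_Icc, Prod.ext_iff]
  constructor
  · rintro ⟨t, ⟨h1, h2⟩, h3, h4⟩
    exact ⟨h4 ▸ h1, h4 ▸ h2, h3.symm⟩
  · rintro ⟨h1, h2, h3⟩
    exact ⟨p.2, ⟨h1, h2⟩, h3.symm, rfl⟩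

lemma mem_hseg_iff' {y a b x' y' : ℤ} :
    ((x', y') : Cell) ∈ (Finset.Icc a b).image (fun t => (t, y)) ↔
      a ≤ x' ∧ x' ≤ b ∧ y' = y := mem_hseg_iff

lemma mem_vseg_iff' {x a b x' y' : ℤ} :
    ((x', y') : Cell) ∈ (Finset.Icc a b).image (fun t => (x, t)) ↔
      a ≤ y' ∧ y' ≤ b ∧ x' = x := mem_vseg_iff

lemma hseg_tr {S : Finset Cell} (h : IsHSeg S) : IsVSeg (S.image tr) := by
  obtain ⟨y, a, b, hab, rfl⟩ := h
  refine ⟨y, a, b, hab, ?_⟩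
  rw [Finset.image_image]
  rfl

lemma vseg_tr {S : Finset Cell} (h : IsVSeg S) : IsHSeg (S.image tr) := by
  obtain ⟨x, a, b, hab, rfl⟩ := h
  refine ⟨x, a, b, hab, ?_⟩
  rw [Finset.image_image]
  rfl

lemma maxV_tr {P M : Finset Cell} (h : IsMaxVInterval P M) :
    IsMaxHInterval (P.image tr) (M.image tr) := by
  obtain ⟨hseg, hsub, hmax⟩ := h
  refine ⟨vseg_tr hseg, Finset.image_subset_image hsub, ?_⟩
  intro I' hI' hI'P hMI'
  have h1 : IsVSeg (I'.image tr) := hseg_tr hI'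
  have h2 : I'.image tr ⊆ P := by
    have := Finset.image_subset_image (f := tr) hI'P
    rwa [image_tr_image_tr] at this
  have h3 : M ⊆ I'.image tr := by
    have := Finset.image_subset_image (f := tr) hMI'
    rwa [image_tr_image_tr] at this
  have := hmax (I'.image tr) h1 h2 h3
  rw [← this, image_tr_image_tr]

lemma maxH_tr {P M : Finset Cell} (h : IsMaxHInterval P M) :
    IsMaxVInterval (P.image tr) (M.image tr) := by
  obtain ⟨hseg, hsub, hmax⟩ := h
  refine ⟨hseg_tr hseg, Finset.image_subset_image hsub, ?_⟩
  intro I' hI' hI'P hMI'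
  have h1 : IsHSeg (I'.image tr) := vseg_tr hI'
  have h2 : I'.image tr ⊆ P := by
    have := Finset.image_subset_image (f := tr) hI'P
    rwa [image_tr_image_tr] at this
  have h3 : M ⊆ I'.image tr := by
    have := Finset.image_subset_image (f := tr) hMI'
    rwa [image_tr_image_tr] at this
  have := hmax (I'.image tr) h1 h2 h3
  rw [← this, image_tr_image_tr]

lemma attacks_tr {P : Finset Cell} {c d : Cell} (h : Attacks P c d) :
    Attacks (P.image tr) (tr c) (tr d) := by
  obtain ⟨hne, M, hM, hc, hd⟩ := h
  refine ⟨fun he => hne (trinj he), M.image tr, ?_, Finset.mem_image_of_mem tr hc,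
    Finset.mem_image_of_mem tr hd⟩
  rcases hM with hM | hM
  · exact Or.inr (maxH_tr hM)
  · exact Or.inl (maxV_tr hM)

lemma rookset_tr {P F : Finset Cell} (h : IsRookSet (P.image tr) F) :
    IsRookSet P (F.image tr) := by
  obtain ⟨hsub, hatt⟩ := h
  constructor
  · intro c hc
    have := hsub (mem_image_tr.mp hc)
    rwa [← mem_image_tr, image_tr_image_tr] at this
  · intro c hc e he hA
    exact hatt (tr c) (mem_image_tr.mp hc) (tr e) (mem_image_tr.mp he) (attacks_tr hA)

lemma rookset_tr' {P F : Finset Cell} (h : IsRookSet P F) :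
    IsRookSet (P.image tr) (F.image tr) := by
  have h' : IsRookSet ((P.image tr).image tr) F := by rwa [image_tr_image_tr]
  exact rookset_tr h'

lemma thin_tr {P : Finset Cell} (h : IsThin P) : IsThin (P.image tr) := by
  rintro ⟨a, hsub⟩
  simp only [Finset.insert_subset_iff, Finset.singleton_subset_iff, mem_image_tr] at hsub
  obtain ⟨h1, h2, h3, h4⟩ := hsub
  refine h ⟨(a.2, a.1), ?_⟩
  simp only [Finset.insert_subset_iff, Finset.singleton_subset_iff]
  exact ⟨h1, h3, h2, h4⟩

lemma main_h (P J : Finset Cell) (d : ℕ) (I : Fin d → Finset Cell)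
    (hthin : IsThin P)
    (hJ : IsMaxHInterval P J) (hI : ∀ j, IsMaxVInterval P (I j))
    (hdisj : ∀ i j, i ≠ j → Disjoint (I i) (I j))
    (hmeet : ∀ j, ((I j) ∩ J).Nonempty)
    (hun : Finset.univ.biUnion I = P)
    (k : ℕ) (hk1 : 1 ≤ k) (hkd : k ≤ d) :
    ({F : Finset Cell | F.card = k ∧ IsRookSet P F}.ncard : ℤ) =
      esymm k (fun j => ((I j).card : ℤ) - 1) +
        ((d : ℤ) - k + 1) * esymm (k - 1) (fun j => ((I j).card : ℤ) - 1) := by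
  classical
  obtain ⟨⟨y0, a, b, hab, hJeq⟩, hJP, hJmax⟩ := hJ
  choose x lo hi hIeq using fun j => (hI j).1
  have hIP : ∀ j, I j ⊆ P := fun j => (hI j).2.1
  have hImax : ∀ j, ∀ I', IsVSeg I' → I' ⊆ P → I j ⊆ I' → I' = I j := fun j => (hI j).2.2
  have hmemI : ∀ j (x' y' : ℤ), ((x', y') : Cell) ∈ I j ↔
      lo j ≤ y' ∧ y' ≤ hi j ∧ x' = x j := by
    intro j x' y'
    rw [(hIeq j).2]
    exact mem_vseg_iff'
  have hmemJ : ∀ (x' y' : ℤ), ((x', y') : Cell) ∈ J ↔ a ≤ x' ∧ x' ≤ b ∧ y' = y0 := by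
    intro x' y'
    rw [hJeq]
    exact mem_hseg_iff'
  have hwJ : ∀ j, (x j, y0) ∈ I j ∧ (x j, y0) ∈ J := by
    intro j
    obtain ⟨q, hq⟩ := hmeet j
    rw [Finset.mem_inter] at hq
    obtain ⟨qx, qy⟩ := q
    have h1 := (hmemI j qx qy).mp hq.1
    have h2 := (hmemJ qx qy).mp hq.2
    have : ((qx, qy) : Cell) = (x j, y0) := by rw [h1.2.2, h2.2.2]
    rw [← this]
    exact hq
  have hPmem : ∀ p : Cell, p ∈ P ↔ ∃ j, p ∈ I j := by
    intro p
    rw [← hun]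
    simp
  have hxinj : Function.Injective x := by
    intro i j hij
    by_contra hne
    have h1 : (x i, y0) ∈ I i := (hwJ i).1
    have h2 : (x i, y0) ∈ I j := by rw [hij]; exact (hwJ j).1
    exact Finset.disjoint_left.mp (hdisj i j hne) h1 h2
  have hcol : ∀ j (x' y' : ℤ), ((x', y') : Cell) ∈ P → x' = x j → ((x', y') : Cell) ∈ I j := by
    intro j x' y' hp hx
    obtain ⟨i, hi⟩ := (hPmem _).mp hp
    have : x i = x j := by rw [← ((hmemI i x' y').mp hi).2.2, hx]
    rwa [hxinj this] at hi
  have hrow : ∀ (x' : ℤ), ((x', y0) : Cell) ∈ P → ((x', y0) : Cell) ∈ J := by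
    intro x' hp
    obtain ⟨j, hj⟩ := (hPmem _).mp hp
    have h1 := (hmemI j x' y0).mp hj
    rw [h1.2.2]
    exact (hwJ j).2
  have hloy0 : ∀ j, lo j ≤ y0 ∧ y0 ≤ hi j := by
    intro j
    have := (hmemI j (x j) y0).mp (hwJ j).1
    exact ⟨this.1, this.2.1⟩
  have hthin' : ∀ (x0 y : ℤ), ((x0, y) : Cell) ∈ P → ((x0 + 1, y) : Cell) ∈ P → y = y0 := by
    intro x0 y h1 h2
    by_contra hne
    obtain ⟨j1, hj1⟩ := (hPmem _).mp h1
    obtain ⟨j2, hj2⟩ := (hPmem _).mp h2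
    have e1 := (hmemI j1 x0 y).mp hj1
    have e2 := (hmemI j2 (x0 + 1) y).mp hj2
    have f1 := hloy0 j1
    have f2 := hloy0 j2
    rcases lt_or_gt_of_ne hne with hlt | hgt
    · have c1 : ((x0, y + 1) : Cell) ∈ P :=
        (hIP j1) ((hmemI j1 x0 (y + 1)).mpr ⟨by omega, by omega, e1.2.2⟩)
      have c2 : ((x0 + 1, y + 1) : Cell) ∈ P :=
        (hIP j2) ((hmemI j2 (x0 + 1) (y + 1)).mpr ⟨by omega, by omega, e2.2.2⟩)
      refine hthin ⟨(x0, y), ?_⟩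
      simp only [Finset.insert_subset_iff, Finset.singleton_subset_iff]
      exact ⟨h1, h2, c1, c2⟩
    · have c1 : ((x0, y - 1) : Cell) ∈ P :=
        (hIP j1) ((hmemI j1 x0 (y - 1)).mpr ⟨by omega, by omega, e1.2.2⟩)
      have c2 : ((x0 + 1, y - 1) : Cell) ∈ P :=
        (hIP j2) ((hmemI j2 (x0 + 1) (y - 1)).mpr ⟨by omega, by omega, e2.2.2⟩)
      refine hthin ⟨(x0, y - 1), ?_⟩
      simp only [Finset.insert_subset_iff, Finset.singleton_subset_iff]
      refine ⟨c1, c2, ?_, ?_⟩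
      · show ((x0, y - 1 + 1) : Cell) ∈ P
        rw [show y - 1 + 1 = y by omega]
        exact h1
      · show ((x0 + 1, y - 1 + 1) : Cell) ∈ P
        rw [show y - 1 + 1 = y by omega]
        exact h2
  -- attack characterization
  have hatt : ∀ c e : Cell, Attacks P c e ↔
      c ≠ e ∧ ((∃ j, c ∈ I j ∧ e ∈ I j) ∨ (c ∈ J ∧ e ∈ J)) := by
    intro c e
    constructor
    · rintro ⟨hne, M, hM, hc, he⟩
      refine ⟨hne, ?_⟩
      rcases hM with ⟨⟨y, a', b', ha'b', hMeq⟩, hMP, hMmax⟩ |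
        ⟨⟨x', a', b', ha'b', hMeq⟩, hMP, hMmax⟩
      · right
        have hcM := mem_hseg_iff.mp (hMeq ▸ hc)
        have heM := mem_hseg_iff.mp (hMeq ▸ he)
        have hcne : c.1 ≠ e.1 := by
          intro hx
          apply hne
          have : c.2 = e.2 := by rw [hcM.2.2, heM.2.2]
          exact Prod.ext hx this
        have ha'b'2 : a' + 1 ≤ b' := by omega
        have m1 : ((a', y) : Cell) ∈ P :=
          hMP (by rw [hMeq]; exact mem_hseg_iff'.mpr ⟨le_refl a', by omega, rfl⟩)
        have m2 : ((a' + 1, y) : Cell) ∈ P :=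
          hMP (by rw [hMeq]; exact mem_hseg_iff'.mpr ⟨by omega, by omega, rfl⟩)
        have hy : y = y0 := hthin' a' y m1 m2
        subst hy
        have hMJ : M ⊆ J := by
          intro p hp
          have hm := mem_hseg_iff.mp (hMeq ▸ hp)
          have : p = ((p.1, y) : Cell) := Prod.ext rfl hm.2.2
          rw [this]
          exact hrow p.1 (this ▸ hMP hp)
        have hJM := hMmax J ⟨y, a, b, hab, hJeq⟩ hJP hMJ
        exact ⟨hJM ▸ hc, hJM ▸ he⟩
      · left
        have hcM := mem_vseg_iff.mp (hMeq ▸ hc)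
        obtain ⟨j, hj⟩ := (hPmem c).mp (hMP hc)
        have hcj : c = ((c.1, c.2) : Cell) := rfl
        have hxj : x' = x j := by
          rw [← hcM.2.2]
          exact ((hmemI j c.1 c.2).mp (hcj ▸ hj)).2.2
        have hMI : M ⊆ I j := by
          intro p hp
          have hm := mem_vseg_iff.mp (hMeq ▸ hp)
          have hpp : p = ((p.1, p.2) : Cell) := rfl
          rw [hpp]
          exact hcol j p.1 p.2 (hpp ▸ hMP hp) (by rw [hm.2.2, hxj])
        have hIM := hMmax (I j) ⟨x j, lo j, hi j, (hIeq j).1, (hIeq j).2⟩ (hIP j) hMI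
        exact ⟨j, hIM ▸ hc, hIM ▸ he⟩
    · rintro ⟨hne, ⟨j, h1, h2⟩ | ⟨h1, h2⟩⟩
      · exact ⟨hne, I j, Or.inr (hI j), h1, h2⟩
      · exact ⟨hne, J, Or.inl ⟨⟨y0, a, b, hab, hJeq⟩, hJP, hJmax⟩, h1, h2⟩
  -- rook set characterization
  set w : Fin d → Cell := fun j => (x j, y0) with hwdef
  have hJw : J = Finset.univ.image w := by
    ext p
    constructor
    · intro hp
      obtain ⟨j, hj⟩ := (hPmem p).mp (hJP hp)
      have hpp : p = ((p.1, p.2) : Cell) := rfl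
      have h1 := (hmemI j p.1 p.2).mp (hpp ▸ hj)
      have h2 := (hmemJ p.1 p.2).mp (hpp ▸ hp)
      refine Finset.mem_image.mpr ⟨j, Finset.mem_univ j, ?_⟩
      rw [hpp, h1.2.2, h2.2.2]
    · intro hp
      obtain ⟨j, -, rfl⟩ := Finset.mem_image.mp hp
      exact (hwJ j).2
  have hrook : ∀ F : Finset Cell, IsRookSet P F ↔
      (F ⊆ P ∧ (∀ j, (F ∩ I j).card ≤ 1) ∧ (F ∩ J).card ≤ 1) := by
    intro F
    constructor
    · rintro ⟨hFP, hbody⟩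
      refine ⟨hFP, fun j => Finset.card_le_one.mpr ?_, Finset.card_le_one.mpr ?_⟩
      · intro c hc e he
        by_contra hne
        rw [Finset.mem_inter] at hc he
        exact hbody c hc.1 e he.1 ((hatt c e).mpr ⟨hne, Or.inl ⟨j, hc.2, he.2⟩⟩)
      · intro c hc e he
        by_contra hne
        rw [Finset.mem_inter] at hc he
        exact hbody c hc.1 e he.1 ((hatt c e).mpr ⟨hne, Or.inr ⟨hc.2, he.2⟩⟩)
    · rintro ⟨hFP, hIle, hJle⟩
      refine ⟨hFP, fun c hc e he hA => ?_⟩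
      rw [hatt] at hA
      obtain ⟨hne, hcase⟩ := hA
      rcases hcase with ⟨j, h1, h2⟩ | ⟨h1, h2⟩
      · exact hne (Finset.card_le_one.mp (hIle j) c (Finset.mem_inter.mpr ⟨hc, h1⟩)
          e (Finset.mem_inter.mpr ⟨he, h2⟩))
      · exact hne (Finset.card_le_one.mp hJle c (Finset.mem_inter.mpr ⟨hc, h1⟩)
          e (Finset.mem_inter.mpr ⟨he, h2⟩))
  have hsetq : {F : Finset Cell | F.card = k ∧ IsRookSet P F} =
      ↑((Finset.univ.biUnion I).powerset.filter
        (fun F => F.card = k ∧ (∀ j, (F ∩ I j).card ≤ 1) ∧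
          (F ∩ Finset.univ.image w).card ≤ 1)) := by
    ext F
    simp only [Set.mem_setOf_eq, Finset.mem_coe, Finset.mem_filter, Finset.mem_powerset]
    rw [hun]
    constructor
    · rintro ⟨hcard', hFr⟩
      obtain ⟨h1, h2, h3⟩ := (hrook F).mp hFr
      exact ⟨h1, hcard', h2, hJw ▸ h3⟩
    · rintro ⟨h1, hcard', h2, h3⟩
      exact ⟨hcard', (hrook F).mpr ⟨h1, h2, by rwa [hJw]⟩⟩
  rw [hsetq, Set.ncard_coe_finset]
  rw [count_main I w (fun j => (hwJ j).1) hdisj k hk1]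
  rw [sum_erase_ppc (fun j => (I j).card - 1)]
  have hIcard : ∀ j, 1 ≤ (I j).card := by
    intro j
    exact Finset.card_pos.mpr ⟨w j, (hwJ j).1⟩
  have hcast : ∀ m : ℕ, ((∑ T ∈ Finset.powersetCard m (Finset.univ : Finset (Fin d)),
      ∏ j ∈ T, ((I j).card - 1) : ℕ) : ℤ) = esymm m (fun j => ((I j).card : ℤ) - 1) := by
    intro m
    rw [esymm, Nat.cast_sum]
    apply Finset.sum_congr rfl
    intro T _
    rw [Nat.cast_prod]
    apply Finset.prod_congr rfl
    intro j _
    rw [Nat.cast_sub (hIcard j), Nat.cast_one]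
  rw [Nat.cast_add, Nat.cast_mul, hcast k, hcast (k - 1)]
  congr 1
  congr 1
  omega

end BrushProof

open BrushProof in
/-- For a pure brush polyomino, the number of `k`-element sets of pairwise
non-attacking cells equals `e_k(ℓ-1) + (d-k+1)·e_{k-1}(ℓ-1)`. -/
theorem statement15 (P J : Finset Cell) (d : ℕ) (I : Fin d → Finset Cell)
    (h : IsPureBrush P J d I) (k : ℕ) (hk1 : 1 ≤ k) (hkd : k ≤ d) :
    ({F : Finset Cell | F.card = k ∧ IsRookSet P F}.ncard : ℤ) =
      esymm k (fun j => ((I j).card : ℤ) - 1) +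
        ((d : ℤ) - k + 1) * esymm (k - 1) (fun j => ((I j).card : ℤ) - 1) := by
  obtain ⟨hpoly, hsimple, hthin, hcard, hor, hdisj, hmeet, hun⟩ := h
  rcases hor with ⟨hJh, hIv⟩ | ⟨hJv, hIh⟩
  · exact main_h P J d I hthin hJh hIv hdisj hmeet hun k hk1 hkd
  · have hun' : Finset.univ.biUnion (fun j => (I j).image tr) = P.image tr := by
      rw [← hun]
      ext p
      simp only [Finset.mem_biUnion, Finset.mem_image, Finset.mem_univ, true_and]
      constructor
      · rintro ⟨j, q, hq, rfl⟩
        exact ⟨q, ⟨j, hq⟩, rfl⟩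
      · rintro ⟨q, ⟨j, hq⟩, rfl⟩
        exact ⟨j, q, hq, rfl⟩
    have h2 := main_h (P.image tr) (J.image tr) d (fun j => (I j).image tr)
      (thin_tr hthin) (maxV_tr hJv) (fun j => maxH_tr (hIh j))
      (fun i j hij => by
        rw [Finset.disjoint_left]
        intro c hc hc'
        exact Finset.disjoint_left.mp (hdisj i j hij) (mem_image_tr.mp hc) (mem_image_tr.mp hc'))
      (fun j => by
        obtain ⟨q, hq⟩ := hmeet j
        rw [Finset.mem_inter] at hq
        exact ⟨tr q, Finset.mem_inter.mpr ⟨Finset.mem_image_of_mem tr hq.1,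
          Finset.mem_image_of_mem tr hq.2⟩⟩)
      hun' k hk1 hkd
    simp only [Finset.card_image_of_injective _ trinj] at h2
    have hsets : {F : Finset Cell | F.card = k ∧ IsRookSet (P.image tr) F} =
        (fun F : Finset Cell => F.image tr) '' {F | F.card = k ∧ IsRookSet P F} := by
      ext F
      simp only [Set.mem_image, Set.mem_setOf_eq]
      constructor
      · rintro ⟨hcard', hF⟩
        exact ⟨F.image tr, ⟨by rw [Finset.card_image_of_injective _ trinj]; exact hcard',
          rookset_tr hF⟩, image_tr_image_tr F⟩
      · rintro ⟨G, ⟨hGcard, hG⟩, rfl⟩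
        exact ⟨by rw [Finset.card_image_of_injective _ trinj]; exact hGcard, rookset_tr' hG⟩
    rw [hsets, Set.ncard_image_of_injective _ (Finset.image_injective trinj)] at h2
    exact h2
end
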